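/- arXiv:2207.11371 — 6 statements merged into one kernel-verified Lean document; each statement's English description precedes it below -/
import Mathlib

section
/- Let 𝔤 be a finite-dimensional real Lie algebra (with its canonical vector-space topology). Let 0 < w₁ < ⋯ < w_m be real numbers and let 𝔫₁,…,𝔫_m be linear subspaces of 𝔤 with 𝔤 = 𝔫₁ ⊕ ⋯ ⊕ 𝔫_m (internal direct sum), such that for all i, j ∈ {1,…,m} the bracket satisfies ⁅𝔫_i, 𝔫_j⁆ ⊆ ⊕_{ℓ : w_ℓ ≥ w_i + w_j} 𝔫_ℓ (in particular ⁅𝔫_i, 𝔫_j⁆ = 0 whenever w_i + w_j > w_m). For t > 0 let δ_t : 𝔤 → 𝔤 be the linear map acting as multiplication by t^{w_j} on 𝔫_j. Then for all x, y ∈ 𝔤 the limit ⁅x,y⁆∙ := lim_{t→∞} δ_t^{-1}(⁅δ_t(x), δ_t(y)⁆) exists; the resulting map (x,y) ↦ ⁅x,y⁆∙ is bilinear, alternating, and satisfies the Jacobi identity (so it is a Lie bracket on 𝔤), and δ_t(⁅x,y⁆∙) = ⁅δ_t(x), δ_t(y)⁆∙ for every t > 0 and all x, y. -/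
open Filter Topology

noncomputable section

theorem stmt_6 (V : Type*) [NormedAddCommGroup V] [NormedSpace ℝ V] [FiniteDimensional ℝ V]
    (B : V →ₗ[ℝ] V →ₗ[ℝ] V)
    (halt : ∀ x, B x x = 0)
    (hjac : ∀ x y z, B x (B y z) + B y (B z x) + B z (B x y) = 0)
    (m : ℕ) (w : Fin m → ℝ) (hw_pos : ∀ j, 0 < w j) (hw_mono : StrictMono w)
    (𝔫 : Fin m → Submodule ℝ V) (hinternal : DirectSum.IsInternal 𝔫)
    (hbracket : ∀ i j (x y : V), x ∈ 𝔫 i → y ∈ 𝔫 j →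
      B x y ∈ ⨆ ℓ ∈ {ℓ : Fin m | w i + w j ≤ w ℓ}, 𝔫 ℓ)
    (δ : ℝ → V →ₗ[ℝ] V)
    (hδ : ∀ t : ℝ, 0 < t → ∀ j, ∀ x ∈ 𝔫 j, δ t x = t ^ w j • x) :
    ∃ Bb : V → V → V,
      (∀ x y, Tendsto (fun t : ℝ => δ t⁻¹ (B (δ t x) (δ t y))) atTop (𝓝 (Bb x y))) ∧
      (∀ x x' y, Bb (x + x') y = Bb x y + Bb x' y) ∧
      (∀ (c : ℝ) (x y : V), Bb (c • x) y = c • Bb x y) ∧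
      (∀ x y y', Bb x (y + y') = Bb x y + Bb x y') ∧
      (∀ (c : ℝ) (x y : V), Bb x (c • y) = c • Bb x y) ∧
      (∀ x, Bb x x = 0) ∧
      (∀ x y z, Bb x (Bb y z) + Bb y (Bb z x) + Bb z (Bb x y) = 0) ∧
      (∀ t : ℝ, 0 < t → ∀ x y, δ t (Bb x y) = Bb (δ t x) (δ t y)) := by
  classical
  -- projections onto the graded pieces
  set e : DirectSum (Fin m) (fun i => 𝔫 i) ≃ₗ[ℝ] V := LinearEquiv.ofBijective (DirectSum.coeLinearMap 𝔫) hinternal with he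
  set π : Fin m → V →ₗ[ℝ] V := fun j =>
    (𝔫 j).subtype ∘ₗ (DirectSum.component ℝ (Fin m) (fun i => (𝔫 i : Submodule ℝ V)) j)
      ∘ₗ e.symm.toLinearMap with hπ
  have hπmem : ∀ j x, π j x ∈ 𝔫 j := fun j x => (e.symm x j).2
  have hπsum : ∀ x, ∑ j, π j x = x := by
    intro x
    have h1 : ∑ j, DirectSum.of (fun i => (𝔫 i : Submodule ℝ V)) j (e.symm x j) = e.symm x :=
      DirectSum.sum_univ_of _
    have h2 := congrArg (DirectSum.coeLinearMap 𝔫) h1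
    rw [map_sum] at h2
    simpa [hπ, DirectSum.coeLinearMap_of, ← DirectSum.apply_eq_component] using h2.trans (e.apply_symm_apply x)
  have hπdiag : ∀ j, ∀ x ∈ 𝔫 j, π j x = x := by
    intro j x hx
    have h1 : e.symm x = DirectSum.of (fun i => (𝔫 i : Submodule ℝ V)) j ⟨x, hx⟩ := by
      rw [LinearEquiv.symm_apply_eq]
      simp [he, DirectSum.coeLinearMap_of]
      exact (DirectSum.coeLinearMap_of 𝔫 j ⟨x, hx⟩).symm
    simp only [hπ, LinearMap.coe_comp, Function.comp_apply, LinearEquiv.coe_coe, h1]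
    rw [← DirectSum.apply_eq_component, DirectSum.of_eq_same]
    rfl
  have hπoff : ∀ i j, i ≠ j → ∀ x ∈ 𝔫 j, π i x = 0 := by
    intro i j hij x hx
    have h1 : e.symm x = DirectSum.of (fun i => (𝔫 i : Submodule ℝ V)) j ⟨x, hx⟩ := by
      rw [LinearEquiv.symm_apply_eq]
      simp [he, DirectSum.coeLinearMap_of]
      exact (DirectSum.coeLinearMap_of 𝔫 j ⟨x, hx⟩).symm
    simp only [hπ, LinearMap.coe_comp, Function.comp_apply, LinearEquiv.coe_coe, h1]
    rw [← DirectSum.apply_eq_component, DirectSum.of_eq_of_ne _ _ _ hij]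
    rfl
  -- projection kills sup of other pieces
  have hπsup : ∀ (S : Set (Fin m)) (j : Fin m), j ∉ S →
      ∀ x ∈ (⨆ ℓ ∈ S, 𝔫 ℓ), π j x = 0 := by
    intro S j hj x hx
    have hle : (⨆ ℓ ∈ S, 𝔫 ℓ) ≤ LinearMap.ker (π j) := by
      refine iSup₂_le fun ℓ hℓ => ?_
      intro v hv
      exact LinearMap.mem_ker.2 (hπoff j ℓ (fun h => hj (h ▸ hℓ)) v hv)
    exact LinearMap.mem_ker.1 (hle hx)
  -- key vanishing lemma
  have hBvan : ∀ (i j ℓ : Fin m) (u v : V), u ∈ 𝔫 i → v ∈ 𝔫 j → w ℓ < w i + w j →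
      π ℓ (B u v) = 0 := by
    intro i j ℓ u v hu hv hlt
    exact hπsup _ ℓ (by simpa using not_le.2 hlt) _ (hbracket i j u v hu hv)
  have hππ : ∀ i j x, π i (π j x) = if i = j then π j x else 0 := by
    intro i j x
    by_cases h : i = j
    · subst h; simp [hπdiag i _ (hπmem i x)]
    · simp [h, hπoff i j h _ (hπmem j x)]
  -- the candidate limit bracket
  set Bb : V → V → V := fun x y => ∑ i, ∑ j, ∑ ℓ,
    (if w ℓ = w i + w j then π ℓ (B (π i x) (π j y)) else 0) with hBb
  have hδπ : ∀ t : ℝ, 0 < t → ∀ x, δ t x = ∑ j, t ^ w j • π j x := by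
    intro t ht x
    conv_lhs => rw [← hπsum x]
    rw [map_sum]
    exact Finset.sum_congr rfl fun j _ => hδ t ht j _ (hπmem j x)
  have hπδ : ∀ t : ℝ, 0 < t → ∀ i x, π i (δ t x) = t ^ w i • π i x := by
    intro t ht i x
    rw [hδπ t ht x, map_sum, Finset.sum_eq_single i]
    · rw [map_smul, hππ, if_pos rfl]
    · intro j _ hj
      rw [map_smul, hππ, if_neg (Ne.symm hj), smul_zero]
    · simp
  -- formula for the rescaled bracket
  have hF : ∀ t : ℝ, 0 < t → ∀ x y, δ t⁻¹ (B (δ t x) (δ t y)) =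
      ∑ i, ∑ j, ∑ ℓ, t ^ (w i + w j - w ℓ) • π ℓ (B (π i x) (π j y)) := by
    intro t ht x y
    have hBd : ∀ u v : V, δ t⁻¹ (B u v) = ∑ ℓ, t ^ (-(w ℓ)) • π ℓ (B u v) := by
      intro u v
      conv_lhs => rw [← hπsum (B u v)]
      rw [map_sum]
      refine Finset.sum_congr rfl fun ℓ _ => ?_
      rw [hδ t⁻¹ (by positivity) ℓ _ (hπmem ℓ _), Real.inv_rpow ht.le, ← Real.rpow_neg ht.le]
    rw [hδπ t ht x, hδπ t ht y]
    simp only [map_sum, map_smul, LinearMap.sum_apply, LinearMap.smul_apply, hBd,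
      Finset.smul_sum]
    rw [Finset.sum_comm]
    refine Finset.sum_congr rfl fun i _ => Finset.sum_congr rfl fun j _ =>
      Finset.sum_congr rfl fun ℓ _ => ?_
    rw [smul_smul, smul_smul, ← Real.rpow_add ht, ← Real.rpow_add ht]
    congr 1
    ring
  -- convergence
  have htend : ∀ x y, Tendsto (fun t : ℝ => δ t⁻¹ (B (δ t x) (δ t y))) atTop (𝓝 (Bb x y)) := by
    intro x y
    have h1 : Tendsto (fun t : ℝ => ∑ i, ∑ j, ∑ ℓ,
        t ^ (w i + w j - w ℓ) • π ℓ (B (π i x) (π j y))) atTop (𝓝 (Bb x y)) := by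
      rw [hBb]
      refine tendsto_finset_sum _ fun i _ => tendsto_finset_sum _ fun j _ =>
        tendsto_finset_sum _ fun ℓ _ => ?_
      rcases lt_trichotomy (w ℓ) (w i + w j) with hlt | heq | hgt
      · rw [hBvan i j ℓ _ _ (hπmem i x) (hπmem j y) hlt, if_neg (ne_of_lt hlt)]
        simpa using tendsto_const_nhds
      · rw [if_pos heq, heq, sub_self]
        simp only [Real.rpow_zero, one_smul]
        exact tendsto_const_nhds
      · rw [if_neg (ne_of_gt hgt)]
        have h2 : Tendsto (fun t : ℝ => t ^ (w i + w j - w ℓ)) atTop (𝓝 0) := by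
          have h3 := tendsto_rpow_neg_atTop (y := w ℓ - (w i + w j)) (by linarith)
          simpa [neg_sub] using h3
        simpa using h2.smul_const (π ℓ (B (π i x) (π j y)))
    exact Tendsto.congr' ((eventually_gt_atTop 0).mono fun t ht => (hF t ht x y).symm) h1
  -- bilinearity
  have haddl : ∀ x x' y, Bb (x + x') y = Bb x y + Bb x' y := by
    intro x x' y
    rw [hBb]
    simp only [map_add, LinearMap.add_apply, apply_ite₂ (· + ·)]
    simp only [← Finset.sum_add_distrib]
    refine Finset.sum_congr rfl fun i _ => Finset.sum_congr rfl fun j _ =>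
      Finset.sum_congr rfl fun ℓ _ => ?_
    split_ifs <;> simp
  have haddr : ∀ x y y', Bb x (y + y') = Bb x y + Bb x y' := by
    intro x y y'
    rw [hBb]
    simp only [map_add]
    simp only [← Finset.sum_add_distrib]
    refine Finset.sum_congr rfl fun i _ => Finset.sum_congr rfl fun j _ =>
      Finset.sum_congr rfl fun ℓ _ => ?_
    split_ifs <;> simp
  have hsmull : ∀ (c : ℝ) (x y : V), Bb (c • x) y = c • Bb x y := by
    intro c x y
    rw [hBb]
    simp only [map_smul, LinearMap.smul_apply, Finset.smul_sum]
    refine Finset.sum_congr rfl fun i _ => Finset.sum_congr rfl fun j _ =>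
      Finset.sum_congr rfl fun ℓ _ => ?_
    split_ifs <;> simp
  have hsmulr : ∀ (c : ℝ) (x y : V), Bb x (c • y) = c • Bb x y := by
    intro c x y
    rw [hBb]
    simp only [map_smul, Finset.smul_sum]
    refine Finset.sum_congr rfl fun i _ => Finset.sum_congr rfl fun j _ =>
      Finset.sum_congr rfl fun ℓ _ => ?_
    split_ifs <;> simp
  -- alternating
  have halt' : ∀ x, Bb x x = 0 := by
    intro x
    have h2 : Tendsto (fun t : ℝ => δ t⁻¹ (B (δ t x) (δ t x))) atTop (𝓝 0) := by
      have h3 : (fun t : ℝ => δ t⁻¹ (B (δ t x) (δ t x))) = fun _ => (0 : V) := by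
        funext t; rw [halt, map_zero]
      rw [h3]
      exact tendsto_const_nhds
    exact tendsto_nhds_unique (htend x x) h2
  -- equivariance
  have hequiv : ∀ t : ℝ, 0 < t → ∀ x y, δ t (Bb x y) = Bb (δ t x) (δ t y) := by
    intro t ht x y
    rw [hBb]
    simp only [map_sum]
    refine Finset.sum_congr rfl fun i _ => Finset.sum_congr rfl fun j _ =>
      Finset.sum_congr rfl fun ℓ _ => ?_
    rw [apply_ite (⇑(δ t)), map_zero, hπδ t ht, hπδ t ht]
    split_ifs with h
    · rw [hδ t ht ℓ _ (hπmem ℓ _)]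
      simp only [map_smul, LinearMap.smul_apply, smul_smul]
      congr 1
      rw [h, Real.rpow_add ht]
      ring
    · rfl
  -- the two key structural lemmas for Jacobi
  have hkey : ∀ (x y z : V) (a b c ℓ j : Fin m), w j = w b + w c → w ℓ = w a + w j →
      π ℓ (B (π a x) (π j (B (π b y) (π c z)))) = π ℓ (B (π a x) (B (π b y) (π c z))) := by
    intro x y z a b c ℓ j hj hℓ
    conv_rhs => rw [← hπsum (B (π b y) (π c z))]
    rw [map_sum, map_sum, Finset.sum_eq_single j]
    · intro s _ hs
      rcases lt_or_gt_of_ne (fun h : w s = w j => hs (hw_mono.injective h)) with hlt | hgt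
      · rw [hπsup {ℓ' | w b + w c ≤ w ℓ'} s
          (by simp only [Set.mem_setOf_eq, not_le]; rw [← hj]; exact hlt) _
          (hbracket b c _ _ (hπmem b y) (hπmem c z)), map_zero, map_zero]
      · exact hBvan a s ℓ _ _ (hπmem a x) (hπmem s _) (by rw [hℓ]; linarith)
    · simp
  have hout : ∀ (x y z : V) (a b c ℓ : Fin m), (∀ j, w j ≠ w b + w c) →
      w ℓ = w a + (w b + w c) → π ℓ (B (π a x) (B (π b y) (π c z))) = 0 := by
    intro x y z a b c ℓ hne hℓ
    conv_lhs => rw [← hπsum (B (π b y) (π c z))]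
    rw [map_sum, map_sum]
    refine Finset.sum_eq_zero fun s _ => ?_
    rcases lt_or_gt_of_ne (hne s) with hlt | hgt
    · rw [hπsup {ℓ' | w b + w c ≤ w ℓ'} s
        (by simp only [Set.mem_setOf_eq, not_le]; exact hlt) _
        (hbracket b c _ _ (hπmem b y) (hπmem c z)), map_zero, map_zero]
    · exact hBvan a s ℓ _ _ (hπmem a x) (hπmem s _) (by rw [hℓ]; linarith)
  -- structure lemma: double bracket in graded form
  have hA : ∀ x y z : V, Bb x (Bb y z) = ∑ a, ∑ b, ∑ c, ∑ ℓ,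
      (if w ℓ = w a + (w b + w c) then π ℓ (B (π a x) (B (π b y) (π c z))) else 0) := by
    intro x y z
    have hstep1 : ∀ j : Fin m, π j (Bb y z) =
        ∑ b, ∑ c, (if w j = w b + w c then π j (B (π b y) (π c z)) else 0) := by
      intro j
      have hyz : Bb y z = ∑ b, ∑ c, ∑ s,
          (if w s = w b + w c then π s (B (π b y) (π c z)) else 0) := rfl
      rw [hyz, map_sum]
      refine Finset.sum_congr rfl fun b _ => ?_
      rw [map_sum]
      refine Finset.sum_congr rfl fun c _ => ?_
      rw [map_sum, Finset.sum_eq_single j]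
      · rw [apply_ite (⇑(π j)), map_zero, hππ, if_pos rfl]
      · intro s _ hs
        rw [apply_ite (⇑(π j)), map_zero, hππ, if_neg (Ne.symm hs), ite_self]
      · simp
    have hx1 : Bb x (Bb y z) = ∑ a, ∑ j, ∑ ℓ,
        (if w ℓ = w a + w j then π ℓ (B (π a x) (π j (Bb y z))) else 0) := rfl
    rw [hx1]
    simp only [hstep1]
    have hstep2 : ∀ a j ℓ : Fin m,
        (if w ℓ = w a + w j then π ℓ (B (π a x)
          (∑ b, ∑ c, (if w j = w b + w c then π j (B (π b y) (π c z)) else 0))) else 0)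
        = ∑ b, ∑ c, (if w ℓ = w a + w j then
            (if w j = w b + w c then π ℓ (B (π a x) (π j (B (π b y) (π c z)))) else 0) else 0) := by
      intro a j ℓ
      split_ifs with h
      · simp only [map_sum, apply_ite (⇑(B (π a x))), apply_ite (⇑(π ℓ)), map_zero]
      · simp
    simp only [hstep2]
    -- reorder sums: put j innermost
    have hswap : ∀ f : Fin m → Fin m → Fin m → Fin m → V,
        (∑ j, ∑ ℓ, ∑ b, ∑ c, f j ℓ b c) = ∑ b, ∑ c, ∑ ℓ, ∑ j, f j ℓ b c := by
      intro f
      calc (∑ j, ∑ ℓ, ∑ b, ∑ c, f j ℓ b c)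
          = ∑ ℓ, ∑ j, ∑ b, ∑ c, f j ℓ b c := Finset.sum_comm
        _ = ∑ ℓ, ∑ b, ∑ j, ∑ c, f j ℓ b c :=
            Finset.sum_congr rfl fun ℓ _ => Finset.sum_comm
        _ = ∑ ℓ, ∑ b, ∑ c, ∑ j, f j ℓ b c :=
            Finset.sum_congr rfl fun ℓ _ => Finset.sum_congr rfl fun b _ => Finset.sum_comm
        _ = ∑ b, ∑ ℓ, ∑ c, ∑ j, f j ℓ b c := Finset.sum_comm
        _ = ∑ b, ∑ c, ∑ ℓ, ∑ j, f j ℓ b c :=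
            Finset.sum_congr rfl fun b _ => Finset.sum_comm
    refine Finset.sum_congr rfl fun a _ => ?_
    rw [hswap]
    refine Finset.sum_congr rfl fun b _ => Finset.sum_congr rfl fun c _ =>
      Finset.sum_congr rfl fun ℓ _ => ?_
    by_cases hex : ∃ j₀, w j₀ = w b + w c
    · obtain ⟨j₀, hj₀⟩ := hex
      rw [Finset.sum_eq_single j₀]
      · rw [if_pos hj₀]
        by_cases hC : w ℓ = w a + (w b + w c)
        · rw [if_pos (by rw [hj₀]; exact hC), if_pos hC]
          exact hkey x y z a b c ℓ j₀ hj₀ (by rw [hj₀]; exact hC)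
        · rw [if_neg (by rw [hj₀]; exact hC), if_neg hC]
      · intro s _ hs
        rw [if_neg (fun h : w s = w b + w c => hs (hw_mono.injective (h.trans hj₀.symm))),
          ite_self]
      · simp
    · trans (0 : V)
      · exact Finset.sum_eq_zero fun s _ => by
          rw [if_neg (not_exists.1 hex s), ite_self]
      · by_cases hC : w ℓ = w a + (w b + w c)
        · rw [if_pos hC, hout x y z a b c ℓ (not_exists.1 hex) hC]
        · rw [if_neg hC]
  -- Jacobi identity
  have hjacBb : ∀ x y z, Bb x (Bb y z) + Bb y (Bb z x) + Bb z (Bb x y) = 0 := by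
    intro x y z
    have hcyc : ∀ G : Fin m → Fin m → Fin m → V,
        (∑ a, ∑ b, ∑ c, G a b c) = ∑ a, ∑ b, ∑ c, G b c a := by
      intro G
      refine Eq.symm ?_
      calc (∑ a, ∑ b, ∑ c, G b c a)
          = ∑ b, ∑ a, ∑ c, G b c a := Finset.sum_comm
        _ = ∑ b, ∑ c, ∑ a, G b c a := Finset.sum_congr rfl fun b _ => Finset.sum_comm
    have e2 : Bb y (Bb z x) = ∑ a, ∑ b, ∑ c, ∑ ℓ,
        (if w ℓ = w b + (w c + w a) then π ℓ (B (π b y) (B (π c z) (π a x))) else 0) :=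
      (hA y z x).trans (hcyc (fun a b c => ∑ ℓ,
        (if w ℓ = w a + (w b + w c) then π ℓ (B (π a y) (B (π b z) (π c x))) else 0)))
    have e3 : Bb z (Bb x y) = ∑ a, ∑ b, ∑ c, ∑ ℓ,
        (if w ℓ = w c + (w a + w b) then π ℓ (B (π c z) (B (π a x) (π b y))) else 0) :=
      (hA z x y).trans ((hcyc (fun a b c => ∑ ℓ,
        (if w ℓ = w a + (w b + w c) then π ℓ (B (π a z) (B (π b x) (π c y))) else 0))).trans
        (hcyc (fun a b c => ∑ ℓ,
        (if w ℓ = w b + (w c + w a) then π ℓ (B (π b z) (B (π c x) (π a y))) else 0))))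
    rw [hA x y z, e2, e3]
    simp only [← Finset.sum_add_distrib]
    refine Finset.sum_eq_zero fun a _ => Finset.sum_eq_zero fun b _ =>
      Finset.sum_eq_zero fun c _ => Finset.sum_eq_zero fun ℓ _ => ?_
    by_cases h : w ℓ = w a + (w b + w c)
    · rw [if_pos h, if_pos (by linarith), if_pos (by linarith)]
      simp only [← map_add]
      rw [hjac, map_zero]
    · rw [if_neg h, if_neg (fun hh : w ℓ = w b + (w c + w a) => h (by linarith)),
        if_neg (fun hh : w ℓ = w c + (w a + w b) => h (by linarith))]
      simp
  exact ⟨Bb, htend, haddl, hsmull, haddr, hsmulr, halt', hjacBb, hequiv⟩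
end
end

section
/- Let G = (ℝ^d, ·) and L = (ℝ^m, ∘) be groups with polynomial multiplications and inversions and identity 0, and let i : ℝ^m → ℝ^d be a group homomorphism from L to G given coordinatewise by polynomials. Let (δ_t)_{t>0} be a straight approximate group dilation structure for G with limit law ∙, and (γ_t)_{t>0} a straight approximate group dilation structure for L with limit law ∗. Fix α > 0 and assume that for every v ∈ ℝ^m the limit p(v) := lim_{t→∞} δ_{1/t}( i( γ_{t^{1/α}}(v) ) ) exists. Then p is a continuous group homomorphism from (ℝ^m, ∗) to (ℝ^d, ∙), i.e. p(u ∗ v) = p(u) ∙ p(v) for all u, v ∈ ℝ^m; moreover δ_{s^α}(p(u)) = p(γ_s(u)) for every s > 0 and u ∈ ℝ^m. -/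
open Filter Topology MeasureTheory

noncomputable section

/-- Straight dilation with exponents `a`: `(dil a t u) i = t ^ (a i) * u i`. -/
def dil {d : ℕ} (a : Fin d → ℝ) (t : ℝ) (u : Fin d → ℝ) : Fin d → ℝ :=
  fun i => t ^ a i * u i

/-- A group structure on `ℝ^d` with identity `0` whose multiplication and inversion are
given coordinatewise by real polynomial functions of the coordinates. -/
structure PolyGroup (d : ℕ) where
  mul : (Fin d → ℝ) → (Fin d → ℝ) → (Fin d → ℝ)
  inv : (Fin d → ℝ) → (Fin d → ℝ)
  mul_assoc' : ∀ x y z, mul (mul x y) z = mul x (mul y z)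
  mul_zero' : ∀ x, mul x 0 = x
  zero_mul' : ∀ x, mul 0 x = x
  mul_inv' : ∀ x, mul x (inv x) = 0
  inv_mul' : ∀ x, mul (inv x) x = 0
  poly_mul : ∀ i, ∃ p : MvPolynomial (Fin d ⊕ Fin d) ℝ,
    ∀ x y, mul x y i = MvPolynomial.eval (Sum.elim x y) p
  poly_inv : ∀ i, ∃ p : MvPolynomial (Fin d) ℝ,
    ∀ x, inv x i = MvPolynomial.eval x p

/-- Euclidean norm on `ℝ^d`. -/
def eucNorm {d : ℕ} (x : Fin d → ℝ) : ℝ := Real.sqrt (∑ i, x i ^ 2)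

/-- A straight approximate group dilation structure for `G`, with the limit law `bullet`
and limit inverse `bulletInv`. -/
structure ApproxDil (d : ℕ) (G : PolyGroup d) where
  a : Fin d → ℝ
  a_pos : ∀ i, 0 < a i
  bulletInv : (Fin d → ℝ) → (Fin d → ℝ)
  bullet : (Fin d → ℝ) → (Fin d → ℝ) → (Fin d → ℝ)
  tendsto_inv : ∀ x,
    Tendsto (fun t : ℝ => dil a t⁻¹ (G.inv (dil a t x))) atTop (𝓝 (bulletInv x))
  tendsto_mul : ∀ x y,
    Tendsto (fun t : ℝ => dil a t⁻¹ (G.mul (dil a t x) (dil a t y))) atTop (𝓝 (bullet x y))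

lemma dil_dil {d : ℕ} (a : Fin d → ℝ) {s t : ℝ} (hs : 0 ≤ s) (ht : 0 ≤ t) (u : Fin d → ℝ) :
    dil a s (dil a t u) = dil a (s * t) u := by
  funext j
  simp only [dil, Real.mul_rpow hs ht]
  ring

lemma dil_dil_inv {d : ℕ} (a : Fin d → ℝ) {t : ℝ} (ht : 0 < t) (u : Fin d → ℝ) :
    dil a t (dil a t⁻¹ u) = u := by
  funext j
  simp only [dil, Real.inv_rpow ht.le, ← mul_assoc,
    mul_inv_cancel₀ (Real.rpow_pos_of_pos ht (a j)).ne', one_mul]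

lemma continuous_dil {d : ℕ} (a : Fin d → ℝ) (t : ℝ) : Continuous (dil a t) :=
  continuous_pi fun j => continuous_const.mul (continuous_apply j)

lemma eval_scale {σ : Type*} [Fintype σ] (P : MvPolynomial σ ℝ) (r x : σ → ℝ) :
    MvPolynomial.eval (fun k => r k * x k) P =
      ∑ μ ∈ P.support, (MvPolynomial.coeff μ P * ∏ k, r k ^ μ k) * ∏ k, x k ^ μ k := by
  rw [MvPolynomial.eval_eq']
  refine Finset.sum_congr rfl fun μ _ => ?_
  rw [mul_assoc]
  congr 1
  rw [← Finset.prod_mul_distrib]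
  exact Finset.prod_congr rfl fun k _ => (mul_pow _ _ _)

/-- Linear map from coefficient vectors to polynomial functions. -/
def evalMap {σ : Type*} [Fintype σ] (T : Finset (σ →₀ ℕ)) :
    (T → ℝ) →ₗ[ℝ] ((σ → ℝ) → ℝ) where
  toFun v := fun x => ∑ μ : T, v μ * ∏ i, x i ^ (μ : σ →₀ ℕ) i
  map_add' v w := by funext x; simp [add_mul, Finset.sum_add_distrib]
  map_smul' r v := by funext x; simp [Finset.mul_sum, mul_assoc]

lemma evalMap_injective {σ : Type*} [Fintype σ] (T : Finset (σ →₀ ℕ)) :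
    Function.Injective (evalMap (σ := σ) T) := by
  classical
  rw [← LinearMap.ker_eq_bot, LinearMap.ker_eq_bot']
  intro v hv
  set P : MvPolynomial σ ℝ := ∑ μ : T, MvPolynomial.monomial (μ : σ →₀ ℕ) (v μ) with hPdef
  have heval : ∀ x, MvPolynomial.eval x P = 0 := by
    intro x
    have := congrFun hv x
    simp only [evalMap, LinearMap.coe_mk, AddHom.coe_mk, Pi.zero_apply] at this
    rw [hPdef, map_sum]
    simpa [MvPolynomial.eval_monomial, Finsupp.prod_pow] using this
  have hP0 : P = 0 := MvPolynomial.funext fun x => by simp [heval x]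
  funext μ
  have : MvPolynomial.coeff (μ : σ →₀ ℕ) P = v μ := by
    rw [hPdef, MvPolynomial.coeff_sum]
    rw [Finset.sum_eq_single μ]
    · simp [MvPolynomial.coeff_monomial]
    · intro ν _ hne
      rw [MvPolynomial.coeff_monomial, if_neg (fun h => hne (Subtype.ext h))]
    · simp
  rw [hP0] at this
  simpa using this.symm

lemma poly_family_limit {σ : Type*} [Fintype σ] (T : Finset (σ →₀ ℕ))
    (c : ℝ → (σ →₀ ℕ) → ℝ) (f : ℝ → (σ → ℝ) → ℝ) (F : (σ → ℝ) → ℝ)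
    (hrep : ∀ t x, f t x = ∑ μ ∈ T, c t μ * ∏ i, x i ^ μ i)
    (hconv : ∀ x, Tendsto (fun t => f t x) atTop (𝓝 (F x))) :
    Continuous F ∧ ∀ (x : ℝ → σ → ℝ) (x₀ : σ → ℝ), Tendsto x atTop (𝓝 x₀) →
      Tendsto (fun t => f t (x t)) atTop (𝓝 (F x₀)) := by
  classical
  have hEmb : Topology.IsClosedEmbedding (evalMap (σ := σ) T) :=
    LinearMap.isClosedEmbedding_of_injective (LinearMap.ker_eq_bot.mpr (evalMap_injective T))
  set g : ℝ → (T → ℝ) := fun t μ => c t ↑μ with hg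
  have hfg : ∀ t x, f t x = evalMap T (g t) x := by
    intro t x
    rw [hrep]
    simp only [evalMap, LinearMap.coe_mk, AddHom.coe_mk, hg]
    exact (Finset.sum_attach T _).symm
  have hLg : Tendsto (fun t => evalMap T (g t)) atTop (𝓝 F) := by
    rw [tendsto_pi_nhds]
    intro x
    exact (hconv x).congr (fun t => hfg t x)
  obtain ⟨v, hv⟩ : F ∈ Set.range (evalMap (σ := σ) T) :=
    hEmb.isClosed_range.mem_of_tendsto hLg (Eventually.of_forall fun t => Set.mem_range_self _)
  have hgv : Tendsto g atTop (𝓝 v) :=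
    hEmb.toIsEmbedding.tendsto_nhds_iff.mpr (by simpa [Function.comp_def, hv] using hLg)
  have hF : ∀ x, F x = ∑ μ : T, v μ * ∏ i, x i ^ (μ : σ →₀ ℕ) i := by
    intro x
    rw [← hv]
    rfl
  constructor
  · have hc : Continuous fun x : σ → ℝ => ∑ μ : T, v μ * ∏ i, x i ^ (μ : σ →₀ ℕ) i := by
      apply continuous_finset_sum
      intro μ _
      exact continuous_const.mul (continuous_finset_prod _ fun i _ => (continuous_apply i).pow _)
    exact hc.congr fun x => (hF x).symm
  · intro x x₀ hx
    have hs : Tendsto (fun t => ∑ μ : T, g t μ * ∏ i, x t i ^ (μ : σ →₀ ℕ) i) atTop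
        (𝓝 (∑ μ : T, v μ * ∏ i, x₀ i ^ (μ : σ →₀ ℕ) i)) := by
      apply tendsto_finset_sum
      intro μ _
      exact (tendsto_pi_nhds.mp hgv μ).mul
        (tendsto_finset_prod _ fun i _ => (tendsto_pi_nhds.mp hx i).pow _)
    rw [hF x₀]
    refine hs.congr fun t => ?_
    rw [hrep]
    simp only [hg]
    exact Finset.sum_coe_sort T (fun μ => c t μ * ∏ i, x t i ^ μ i)

theorem stmt_7 (d m : ℕ) (G : PolyGroup d) (L : PolyGroup m)
    (i : (Fin m → ℝ) → (Fin d → ℝ))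
    (hipoly : ∀ j : Fin d, ∃ p : MvPolynomial (Fin m) ℝ,
      ∀ v, i v j = MvPolynomial.eval v p)
    (hihom : ∀ u v, i (L.mul u v) = G.mul (i u) (i v))
    (DG : ApproxDil d G) (DL : ApproxDil m L)
    (α : ℝ) (hα : 0 < α)
    (p : (Fin m → ℝ) → (Fin d → ℝ))
    (hp : ∀ v, Tendsto (fun t : ℝ => dil DG.a t⁻¹ (i (dil DL.a (t ^ (1 / α)) v))) atTop
      (𝓝 (p v))) :
    Continuous p ∧ (∀ u v, p (DL.bullet u v) = DG.bullet (p u) (p v)) ∧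
    (∀ s : ℝ, 0 < s → ∀ u, dil DG.a (s ^ α) (p u) = p (dil DL.a s u)) := by
  classical
  choose P hP using hipoly
  choose Q hQ using G.poly_mul
  set q : ℝ → (Fin m → ℝ) → (Fin d → ℝ) :=
    fun t w => dil DG.a t⁻¹ (i (dil DL.a (t ^ (1 / α)) w)) with hqdef
  have hpq : ∀ v, Tendsto (fun t => q t v) atTop (𝓝 (p v)) := hp
  -- key lemma applied to the family q, coordinatewise
  have key1 : ∀ j : Fin d, Continuous (fun w => p w j) ∧
      ∀ (x : ℝ → Fin m → ℝ) (x₀ : Fin m → ℝ), Tendsto x atTop (𝓝 x₀) →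
        Tendsto (fun t => q t (x t) j) atTop (𝓝 (p x₀ j)) := by
    intro j
    apply poly_family_limit (P j).support
      (fun t μ => t⁻¹ ^ DG.a j *
        (MvPolynomial.coeff μ (P j) * ∏ k, ((t ^ (1 / α)) ^ DL.a k) ^ μ k))
      (fun t w => q t w j) (fun w => p w j)
    · intro t w
      have h1 : q t w j = t⁻¹ ^ DG.a j *
          MvPolynomial.eval (fun k => (t ^ (1 / α)) ^ DL.a k * w k) (P j) := by
        simp only [hqdef, dil, hP]
        rfl
      rw [h1, eval_scale, Finset.mul_sum]
      exact Finset.sum_congr rfl fun μ _ => by ring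
    · intro w
      exact tendsto_pi_nhds.mp (hpq w) j
  have hcontp : Continuous p := continuous_pi fun j => (key1 j).1
  -- key lemma applied to the rescaled-multiplication family, coordinatewise
  have key2 : ∀ j : Fin d,
      ∀ (z : ℝ → (Fin d ⊕ Fin d) → ℝ) (z₀ : (Fin d ⊕ Fin d) → ℝ), Tendsto z atTop (𝓝 z₀) →
        Tendsto (fun t => dil DG.a t⁻¹
            (G.mul (dil DG.a t (z t ∘ Sum.inl)) (dil DG.a t (z t ∘ Sum.inr))) j) atTop
          (𝓝 (DG.bullet (z₀ ∘ Sum.inl) (z₀ ∘ Sum.inr) j)) := by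
    intro j
    refine (poly_family_limit (Q j).support
      (fun t μ => t⁻¹ ^ DG.a j * (MvPolynomial.coeff μ (Q j) *
        ∏ k, (Sum.elim (fun i' => t ^ DG.a i') (fun i' => t ^ DG.a i') k) ^ μ k))
      (fun t z => dil DG.a t⁻¹ (G.mul (dil DG.a t (z ∘ Sum.inl)) (dil DG.a t (z ∘ Sum.inr))) j)
      (fun z => DG.bullet (z ∘ Sum.inl) (z ∘ Sum.inr) j) ?_ ?_).2
    · intro t z
      have h1 : Sum.elim (dil DG.a t (z ∘ Sum.inl)) (dil DG.a t (z ∘ Sum.inr)) =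
          fun k => (Sum.elim (fun i' => t ^ DG.a i') (fun i' => t ^ DG.a i') k) * z k := by
        funext k
        cases k <;> rfl
      have h2 : dil DG.a t⁻¹
          (G.mul (dil DG.a t (z ∘ Sum.inl)) (dil DG.a t (z ∘ Sum.inr))) j =
          t⁻¹ ^ DG.a j * MvPolynomial.eval
            (fun k => (Sum.elim (fun i' => t ^ DG.a i') (fun i' => t ^ DG.a i') k) * z k)
            (Q j) := by
        simp only [dil, hQ, h1]
      show dil DG.a t⁻¹
          (G.mul (dil DG.a t (z ∘ Sum.inl)) (dil DG.a t (z ∘ Sum.inr))) j = _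
      rw [h2, eval_scale, Finset.mul_sum]
      exact Finset.sum_congr rfl fun μ _ => by ring
    · intro z
      exact tendsto_pi_nhds.mp (DG.tendsto_mul (z ∘ Sum.inl) (z ∘ Sum.inr)) j
  refine ⟨hcontp, ?_, ?_⟩
  · -- homomorphism property
    intro u v
    funext j
    have h1α : (0:ℝ) < 1 / α := by positivity
    have hw : Tendsto (fun t : ℝ => dil DL.a (t ^ (1 / α))⁻¹
        (L.mul (dil DL.a (t ^ (1 / α)) u) (dil DL.a (t ^ (1 / α)) v))) atTop
        (𝓝 (DL.bullet u v)) :=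
      (DL.tendsto_mul u v).comp (tendsto_rpow_atTop h1α)
    have hA : Tendsto (fun t => q t (dil DL.a (t ^ (1 / α))⁻¹
        (L.mul (dil DL.a (t ^ (1 / α)) u) (dil DL.a (t ^ (1 / α)) v))) j) atTop
        (𝓝 (p (DL.bullet u v) j)) := (key1 j).2 _ _ hw
    have hz : Tendsto (fun t => Sum.elim (q t u) (q t v)) atTop
        (𝓝 (Sum.elim (p u) (p v))) := by
      rw [tendsto_pi_nhds]
      rintro (k | k)
      · exact tendsto_pi_nhds.mp (hpq u) k
      · exact tendsto_pi_nhds.mp (hpq v) k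
    have hB := key2 j _ _ hz
    have hBB : Tendsto (fun t => dil DG.a t⁻¹
        (G.mul (dil DG.a t (q t u)) (dil DG.a t (q t v))) j) atTop
        (𝓝 (DG.bullet (p u) (p v) j)) := hB
    have heq : ∀ᶠ t : ℝ in atTop,
        q t (dil DL.a (t ^ (1 / α))⁻¹
          (L.mul (dil DL.a (t ^ (1 / α)) u) (dil DL.a (t ^ (1 / α)) v))) j =
        dil DG.a t⁻¹ (G.mul (dil DG.a t (q t u)) (dil DG.a t (q t v))) j := by
      filter_upwards [eventually_gt_atTop (0:ℝ)] with t ht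
      have hs : (0:ℝ) < t ^ (1 / α) := Real.rpow_pos_of_pos ht _
      have e1 : dil DL.a (t ^ (1 / α)) (dil DL.a (t ^ (1 / α))⁻¹
          (L.mul (dil DL.a (t ^ (1 / α)) u) (dil DL.a (t ^ (1 / α)) v))) =
          L.mul (dil DL.a (t ^ (1 / α)) u) (dil DL.a (t ^ (1 / α)) v) :=
        dil_dil_inv _ hs _
      have e2 : dil DG.a t (q t u) = i (dil DL.a (t ^ (1 / α)) u) := dil_dil_inv _ ht _
      have e3 : dil DG.a t (q t v) = i (dil DL.a (t ^ (1 / α)) v) := dil_dil_inv _ ht _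
      simp only [hqdef, e1, e2, e3, hihom, dil_dil_inv _ ht]
    exact tendsto_nhds_unique (hA.congr' heq) hBB
  · -- dilation equivariance
    intro s hs u
    have hsα : (0:ℝ) < s ^ α := Real.rpow_pos_of_pos hs α
    have hmul : Tendsto (fun t : ℝ => t * s ^ α) atTop atTop :=
      Tendsto.atTop_mul_const hsα tendsto_id
    have h2 : Tendsto (fun t => dil DG.a (s ^ α) (q (t * s ^ α) u)) atTop
        (𝓝 (dil DG.a (s ^ α) (p u))) :=
      ((continuous_dil DG.a (s ^ α)).tendsto (p u)).comp ((hpq u).comp hmul)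
    have heq : ∀ᶠ t : ℝ in atTop,
        dil DG.a (s ^ α) (q (t * s ^ α) u) = q t (dil DL.a s u) := by
      filter_upwards [eventually_gt_atTop (0:ℝ)] with t ht
      have h1 : (t * s ^ α) ^ (1 / α) = t ^ (1 / α) * s := by
        rw [Real.mul_rpow ht.le hsα.le, ← Real.rpow_mul hs.le,
          mul_one_div_cancel hα.ne', Real.rpow_one]
      have h2' : s ^ α * (t * s ^ α)⁻¹ = t⁻¹ := by
        field_simp
      calc dil DG.a (s ^ α) (q (t * s ^ α) u)
          = dil DG.a (s ^ α * (t * s ^ α)⁻¹) (i (dil DL.a ((t * s ^ α) ^ (1 / α)) u)) :=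
            dil_dil _ hsα.le (by positivity) _
        _ = dil DG.a t⁻¹ (i (dil DL.a (t ^ (1 / α)) (dil DL.a s u))) := by
            rw [h2', h1, ← dil_dil _ (Real.rpow_pos_of_pos ht _).le hs.le]
        _ = q t (dil DL.a s u) := rfl
    exact tendsto_nhds_unique (h2.congr' heq) (hpq (dil DL.a s u))
end
end

section
/- Let b₁,…,b_d > 0 and let (ℝ^d, ·) be a group with identity 0 whose multiplication has i-th coordinate (x·y)_i = x_i + y_i + p̄_i(x,y), where each p̄_i is a finite real linear combination of monomials ∏_k x_k^{m_k} ∏_k y_k^{n_k} of total degree Σ_k (m_k + n_k) ≥ 2 and of weighted degree Σ_k (m_k + n_k)·b_k ≤ b_i. Then, with N_w(z) := max_{1≤i≤d} |z_i|^{1/b_i}, there exists a constant C such that N_w(x·y) ≤ C·(N_w(x) + N_w(y) + 1) for all x, y ∈ ℝ^d. -/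
open Filter Topology

noncomputable section

/-- The homogeneous quasi-norm associated with the weights `b`. -/
def Nw {d : ℕ} (b : Fin d → ℝ) (z : Fin d → ℝ) : ℝ := ⨆ i, |z i| ^ (1 / b i)

lemma Nw_nonneg {d : ℕ} (b z : Fin d → ℝ) : 0 ≤ Nw b z :=
  Real.iSup_nonneg fun _ => Real.rpow_nonneg (abs_nonneg _) _

lemma rpow_finset_sum {ι : Type*} (M : ℝ) (hM : 0 < M) (s : Finset ι) (f : ι → ℝ) :
    M ^ (∑ k ∈ s, f k) = ∏ k ∈ s, M ^ f k := by
  classical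
  induction s using Finset.induction with
  | empty => simp
  | insert _ _ h ih => rw [Finset.sum_insert h, Finset.prod_insert h, Real.rpow_add hM, ih]

lemma coord_le {d : ℕ} (b : Fin d → ℝ) (hb : ∀ i, 0 < b i) (z : Fin d → ℝ)
    (M : ℝ) (hM : Nw b z ≤ M) (i : Fin d) : |z i| ≤ M ^ (b i) := by
  have h1 : |z i| ^ (1 / b i) ≤ M := by
    refine le_trans ?_ hM
    rw [Nw]
    exact le_ciSup (f := fun j => |z j| ^ (1 / b j)) (Finite.bddAbove_range _) i
  have h2 := Real.rpow_le_rpow (Real.rpow_nonneg (abs_nonneg _) _) h1 (hb i).le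
  rwa [← Real.rpow_mul (abs_nonneg _), one_div_mul_cancel (hb i).ne', Real.rpow_one] at h2

theorem stmt_9 (d : ℕ) (b : Fin d → ℝ) (hb : ∀ i, 0 < b i)
    (mul : (Fin d → ℝ) → (Fin d → ℝ) → (Fin d → ℝ))
    (P : Fin d → MvPolynomial (Fin d ⊕ Fin d) ℝ)
    (hmul : ∀ x y i, mul x y i = x i + y i + MvPolynomial.eval (Sum.elim x y) (P i))
    (hP : ∀ i, ∀ m ∈ (P i).support,
      (2 ≤ m.sum fun _ e => e) ∧
        (m.sum fun k e => (e : ℝ) * b (Sum.elim id id k)) ≤ b i)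
    (hassoc : ∀ x y z, mul (mul x y) z = mul x (mul y z))
    (hmulzero : ∀ x, mul x 0 = x) (hzeromul : ∀ x, mul 0 x = x)
    (hinv : ∀ x, ∃ y, mul x y = 0 ∧ mul y x = 0) :
    ∃ C : ℝ, ∀ x y, Nw b (mul x y) ≤ C * (Nw b x + Nw b y + 1) := by
  classical
  set A : Fin d → ℝ := fun i => ∑ m ∈ (P i).support, |MvPolynomial.coeff m (P i)| with hA
  have hA0 : ∀ i, 0 ≤ A i := fun i => Finset.sum_nonneg fun _ _ => abs_nonneg _
  set C : ℝ := 1 + ∑ i, (2 + A i) ^ (1 / b i) with hC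
  have hterm : ∀ i, (2 + A i) ^ (1 / b i) ≤ C := by
    intro i
    have h1 : (2 + A i) ^ (1 / b i) ≤ ∑ j, (2 + A j) ^ (1 / b j) :=
      Finset.single_le_sum (f := fun j => (2 + A j) ^ (1 / b j))
        (fun j _ => Real.rpow_nonneg (by linarith [hA0 j]) _) (Finset.mem_univ i)
    linarith
  refine ⟨C, fun x y => ?_⟩
  set M : ℝ := Nw b x + Nw b y + 1 with hMdef
  have hM1 : 1 ≤ M := by
    have := Nw_nonneg b x; have := Nw_nonneg b y
    simp only [hMdef]; linarith
  have hM0 : (0:ℝ) < M := lt_of_lt_of_le one_pos hM1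
  have hv : ∀ k, |Sum.elim x y k| ≤ M ^ (b (Sum.elim id id k)) := by
    rintro (k | k)
    · exact coord_le b hb x M (by have := Nw_nonneg b y; simp only [hMdef]; linarith) k
    · exact coord_le b hb y M (by have := Nw_nonneg b x; simp only [hMdef]; linarith) k
  have key : ∀ i, |MvPolynomial.eval (Sum.elim x y) (P i)| ≤ A i * M ^ (b i) := by
    intro i
    rw [MvPolynomial.eval_eq']
    simp only [hA]
    rw [Finset.sum_mul]
    refine le_trans (Finset.abs_sum_le_sum_abs _ _) (Finset.sum_le_sum fun m hm => ?_)
    rw [abs_mul]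
    have hmono : |∏ k, Sum.elim x y k ^ m k| ≤ M ^ b i := by
      rw [Finset.abs_prod]
      simp_rw [abs_pow]
      have h1 : (∏ k, |Sum.elim x y k| ^ m k) ≤ ∏ k, (M ^ b (Sum.elim id id k)) ^ m k :=
        Finset.prod_le_prod (fun k _ => pow_nonneg (abs_nonneg _) _)
          (fun k _ => pow_le_pow_left₀ (abs_nonneg _) (hv k) _)
      refine le_trans h1 ?_
      have h2 : ∀ k : Fin d ⊕ Fin d,
          (M ^ b (Sum.elim id id k)) ^ m k = M ^ (b (Sum.elim id id k) * m k) := by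
        intro k
        rw [← Real.rpow_natCast (M ^ b (Sum.elim id id k)) (m k), ← Real.rpow_mul hM0.le]
      simp_rw [h2]
      rw [← rpow_finset_sum M hM0]
      apply Real.rpow_le_rpow_of_exponent_le hM1
      have hw := (hP i m hm).2
      rw [Finsupp.sum_fintype _ _ (fun k => by simp)] at hw
      refine le_trans (le_of_eq (Finset.sum_congr rfl fun k _ => by ring)) hw
    exact mul_le_mul_of_nonneg_left hmono (abs_nonneg _)
  have hcoord : ∀ i, |mul x y i| ≤ (2 + A i) * M ^ b i := by
    intro i
    rw [hmul x y i]
    have hx : |x i| ≤ M ^ b i :=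
      coord_le b hb x M (by have := Nw_nonneg b y; simp only [hMdef]; linarith) i
    have hy : |y i| ≤ M ^ b i :=
      coord_le b hb y M (by have := Nw_nonneg b x; simp only [hMdef]; linarith) i
    calc |x i + y i + MvPolynomial.eval (Sum.elim x y) (P i)|
        ≤ |x i| + |y i| + |MvPolynomial.eval (Sum.elim x y) (P i)| := by
          exact le_trans (abs_add_le _ _) (by gcongr; exact abs_add_le _ _)
      _ ≤ M ^ b i + M ^ b i + A i * M ^ b i := add_le_add (add_le_add hx hy) (key i)
      _ = (2 + A i) * M ^ b i := by ring
  have hC0 : (0:ℝ) ≤ C := by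
    have : (0:ℝ) ≤ ∑ j, (2 + A j) ^ (1 / b j) :=
      Finset.sum_nonneg fun j _ => Real.rpow_nonneg (by linarith [hA0 j]) _
    simp only [hC]; linarith
  rw [Nw]
  refine Real.iSup_le (fun i => ?_) (mul_nonneg hC0 hM0.le)
  have h1 : |mul x y i| ^ (1 / b i) ≤ ((2 + A i) * M ^ b i) ^ (1 / b i) :=
    Real.rpow_le_rpow (abs_nonneg _) (hcoord i) (one_div_nonneg.mpr (hb i).le)
  refine le_trans h1 ?_
  rw [Real.mul_rpow (by linarith [hA0 i]) (Real.rpow_nonneg hM0.le _),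
    ← Real.rpow_mul hM0.le, mul_one_div_cancel (hb i).ne', Real.rpow_one]
  exact mul_le_mul_of_nonneg_right (hterm i) hM0.le
end
end

section
/- Let G = (ℝ^d, ·) be a group whose underlying set is ℝ^d, with identity 0, whose multiplication and inversion are given coordinatewise by real polynomial functions. Then for every compact set K ⊆ ℝ^d there exists a constant C_K such that for all x, y ∈ K: ‖x⁻¹·y‖₂ ≤ C_K‖x − y‖₂ and ‖x − y‖₂ ≤ C_K‖x⁻¹·y‖₂. -/
open Filter Topology MeasureTheory

noncomputable section

/-- Evaluation of a multivariate polynomial is `C¹`. -/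
lemma contDiff_mvpoly_eval {σ : Type*} [Fintype σ] (p : MvPolynomial σ ℝ) :
    ContDiff ℝ 1 fun x : σ → ℝ => MvPolynomial.eval x p := by
  induction p using MvPolynomial.induction_on with
  | C a => simpa using contDiff_const (c := a)
  | add p q hp hq => simpa [MvPolynomial.eval_add] using hp.add hq
  | mul_X p i hp =>
      simp only [MvPolynomial.eval_mul, MvPolynomial.eval_X]
      exact hp.mul ((ContinuousLinearMap.proj i : (σ → ℝ) →L[ℝ] ℝ).contDiff)

/-- A `C¹` map is Lipschitz on every compact set (with a uniform constant). -/
lemma lipOn {E F : Type*} [NormedAddCommGroup E] [NormedSpace ℝ E]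
    [FiniteDimensional ℝ E] [NormedAddCommGroup F] [NormedSpace ℝ F] {f : E → F} (hf : ContDiff ℝ 1 f)
    {S : Set E} (hS : IsCompact S) :
    ∃ C : ℝ, 0 ≤ C ∧ ∀ p ∈ S, ∀ q ∈ S, ‖f p - f q‖ ≤ C * ‖p - q‖ := by
  obtain ⟨R, hR⟩ := hS.isBounded.subset_closedBall 0
  have hc : Continuous fun x : E => ‖fderiv ℝ f x‖ :=
    (hf.continuous_fderiv one_ne_zero).norm
  rcases (isCompact_closedBall (0 : E) R).exists_bound_of_continuousOn
    hc.continuousOn with ⟨C, hC⟩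
  refine ⟨max C 0, le_max_right _ _, fun p hp q hq => ?_⟩
  have h := (convex_closedBall (0 : E) R).norm_image_sub_le_of_norm_fderiv_le
    (f := f) (C := max C 0)
    (fun x _ => (hf.differentiable one_ne_zero).differentiableAt)
    (fun x hx => le_trans (le_trans (le_abs_self _)
      (by simpa [Real.norm_eq_abs] using hC x hx)) (le_max_left _ _))
    (hR hq) (hR hp)
  exact h

lemma norm_le_eucNorm {d : ℕ} (v : Fin d → ℝ) : ‖v‖ ≤ eucNorm v := by
  have h0 : 0 ≤ eucNorm v := Real.sqrt_nonneg _
  refine pi_norm_le_iff_of_nonneg h0 |>.2 fun i => ?_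
  have : v i ^ 2 ≤ ∑ j, v j ^ 2 :=
    Finset.single_le_sum (fun j _ => sq_nonneg (v j)) (Finset.mem_univ i)
  calc ‖v i‖ = Real.sqrt (v i ^ 2) := by
        rw [Real.sqrt_sq_eq_abs, Real.norm_eq_abs]
    _ ≤ eucNorm v := Real.sqrt_le_sqrt this

lemma eucNorm_le {d : ℕ} (v : Fin d → ℝ) : eucNorm v ≤ Real.sqrt d * ‖v‖ := by
  have h1 : ∀ i, v i ^ 2 ≤ ‖v‖ ^ 2 := by
    intro i
    have : |v i| ≤ ‖v‖ := by simpa [Real.norm_eq_abs] using norm_le_pi_norm v i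
    nlinarith [abs_nonneg (v i), sq_abs (v i)]
  have h2 : (∑ i, v i ^ 2) ≤ (d : ℝ) * ‖v‖ ^ 2 := by
    calc (∑ i, v i ^ 2) ≤ ∑ _i : Fin d, ‖v‖ ^ 2 :=
          Finset.sum_le_sum fun i _ => h1 i
      _ = (d : ℝ) * ‖v‖ ^ 2 := by simp [mul_comm]
  calc eucNorm v ≤ Real.sqrt ((d : ℝ) * ‖v‖ ^ 2) := Real.sqrt_le_sqrt h2
    _ = Real.sqrt d * ‖v‖ := by
        rw [Real.sqrt_mul (Nat.cast_nonneg d), Real.sqrt_sq (norm_nonneg v)]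

theorem stmt_10 (d : ℕ) (G : PolyGroup d) (K : Set (Fin d → ℝ)) (hK : IsCompact K) :
    ∃ C : ℝ, ∀ x ∈ K, ∀ y ∈ K,
      eucNorm (G.mul (G.inv x) y) ≤ C * eucNorm (x - y) ∧
      eucNorm (x - y) ≤ C * eucNorm (G.mul (G.inv x) y) := by
  classical
  -- smoothness of the pairing into Sum.elim
  have hSum : ContDiff ℝ 1
      (fun p : (Fin d → ℝ) × (Fin d → ℝ) => Sum.elim p.1 p.2) := by
    refine contDiff_pi.2 ?_
    rintro (j | j)
    · exact ((ContinuousLinearMap.proj j : (Fin d → ℝ) →L[ℝ] ℝ).contDiff).comp contDiff_fst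
    · exact ((ContinuousLinearMap.proj j : (Fin d → ℝ) →L[ℝ] ℝ).contDiff).comp contDiff_snd
  have hmul : ContDiff ℝ 1
      (fun p : (Fin d → ℝ) × (Fin d → ℝ) => G.mul p.1 p.2) := by
    refine contDiff_pi.2 fun i => ?_
    obtain ⟨q, hq⟩ := G.poly_mul i
    have : (fun p : (Fin d → ℝ) × (Fin d → ℝ) => G.mul p.1 p.2 i)
        = (fun x : (Fin d ⊕ Fin d) → ℝ => MvPolynomial.eval x q) ∘
          (fun p : (Fin d → ℝ) × (Fin d → ℝ) => Sum.elim p.1 p.2) := by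
      funext p; exact hq p.1 p.2
    rw [this]
    exact (contDiff_mvpoly_eval q).comp hSum
  have hinv : ContDiff ℝ 1 (fun x : Fin d → ℝ => G.inv x) := by
    refine contDiff_pi.2 fun i => ?_
    obtain ⟨q, hq⟩ := G.poly_inv i
    have : (fun x : Fin d → ℝ => G.inv x i)
        = fun x : Fin d → ℝ => MvPolynomial.eval x q := by funext x; exact hq x
    rw [this]; exact contDiff_mvpoly_eval q
  -- F (x, y) = x⁻¹ ⬝ y
  set F : (Fin d → ℝ) × (Fin d → ℝ) → (Fin d → ℝ) :=
    fun p => G.mul (G.inv p.1) p.2 with hF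
  have hFc : ContDiff ℝ 1 F := by
    have : F = (fun p : (Fin d → ℝ) × (Fin d → ℝ) => G.mul p.1 p.2) ∘
        (fun p : (Fin d → ℝ) × (Fin d → ℝ) => (G.inv p.1, p.2)) := rfl
    rw [this]
    exact hmul.comp ((hinv.comp contDiff_fst).prodMk contDiff_snd)
  -- H (x, z) = x - x ⬝ z
  set H : (Fin d → ℝ) × (Fin d → ℝ) → (Fin d → ℝ) :=
    fun p => p.1 - G.mul p.1 p.2 with hH
  have hHc : ContDiff ℝ 1 H := contDiff_fst.sub hmul
  -- compact sets
  have hKK : IsCompact (K ×ˢ K) := hK.prod hK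
  have hT : IsCompact (F '' (K ×ˢ K)) := hKK.image hFc.continuous
  have hS2 : IsCompact (K ×ˢ (F '' (K ×ˢ K) ∪ {0})) :=
    hK.prod (hT.union isCompact_singleton)
  obtain ⟨C1, hC1n, hC1⟩ := lipOn hFc hKK
  obtain ⟨C2, hC2n, hC2⟩ := lipOn hHc hS2
  have hd : (0 : ℝ) ≤ Real.sqrt d := Real.sqrt_nonneg _
  refine ⟨Real.sqrt d * C1 + Real.sqrt d * C2, fun x hx y hy => ?_⟩
  have hxx : (x, x) ∈ K ×ˢ K := ⟨hx, hx⟩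
  have hxy : (x, y) ∈ K ×ˢ K := ⟨hx, hy⟩
  -- norms of differences of pairs
  have hpair : ∀ u z : Fin d → ℝ, ‖((u, z) : (Fin d → ℝ) × (Fin d → ℝ)) - (u, 0)‖ = ‖z‖ := by
    intro u z
    have : ((u, z) : (Fin d → ℝ) × (Fin d → ℝ)) - (u, 0) = (0, z) := by
      simp [Prod.ext_iff]
    rw [this, Prod.norm_def]
    simp [norm_nonneg]
  -- first inequality
  have h1 : ‖F (x, y) - F (x, x)‖ ≤ C1 * ‖((x, y) : _ × _) - (x, x)‖ :=
    hC1 _ hxy _ hxx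
  have hFxx : F (x, x) = 0 := G.inv_mul' x
  have hnxy : ‖((x, y) : (Fin d → ℝ) × (Fin d → ℝ)) - (x, x)‖ = ‖x - y‖ := by
    have : ((x, y) : (Fin d → ℝ) × (Fin d → ℝ)) - (x, x) = (0, y - x) := by
      simp [Prod.ext_iff]
    rw [this, Prod.norm_def]
    simp [norm_nonneg, norm_sub_rev]
  have key1 : eucNorm (G.mul (G.inv x) y) ≤ Real.sqrt d * C1 * eucNorm (x - y) := by
    have e1 : eucNorm (F (x, y)) ≤ Real.sqrt d * ‖F (x, y)‖ := eucNorm_le _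
    have e2 : ‖F (x, y)‖ ≤ C1 * ‖x - y‖ := by
      rw [hFxx, sub_zero, hnxy] at h1
      exact h1
    have e3 : ‖x - y‖ ≤ eucNorm (x - y) := norm_le_eucNorm _
    have : eucNorm (F (x, y)) ≤ Real.sqrt d * (C1 * eucNorm (x - y)) := by
      calc eucNorm (F (x, y)) ≤ Real.sqrt d * ‖F (x, y)‖ := e1
        _ ≤ Real.sqrt d * (C1 * eucNorm (x - y)) := by
            apply mul_le_mul_of_nonneg_left _ hd
            exact e2.trans (mul_le_mul_of_nonneg_left e3 hC1n)
    simpa [mul_assoc] using this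
  -- second inequality
  set z : Fin d → ℝ := F (x, y) with hz
  have hz1 : (x, z) ∈ K ×ˢ (F '' (K ×ˢ K) ∪ {0}) := ⟨hx, Or.inl ⟨(x, y), hxy, rfl⟩⟩
  have hz0 : ((x, (0 : Fin d → ℝ)) : _ × _) ∈ K ×ˢ (F '' (K ×ˢ K) ∪ {0}) :=
    ⟨hx, Or.inr rfl⟩
  have h2 : ‖H (x, z) - H (x, 0)‖ ≤ C2 * ‖((x, z) : _ × _) - (x, 0)‖ :=
    hC2 _ hz1 _ hz0
  have hHz : H (x, z) = x - y := by
    have : G.mul x (G.mul (G.inv x) y) = y := by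
      rw [← G.mul_assoc', G.mul_inv', G.zero_mul']
    simp only [hH, hz, hF]
    rw [this]
  have hH0 : H (x, 0) = 0 := by
    simp only [hH]
    rw [G.mul_zero']
    simp
  have key2 : eucNorm (x - y) ≤ Real.sqrt d * C2 * eucNorm (G.mul (G.inv x) y) := by
    have e1 : eucNorm (x - y) ≤ Real.sqrt d * ‖x - y‖ := eucNorm_le _
    have e2 : ‖x - y‖ ≤ C2 * ‖z‖ := by
      have := h2
      rw [hHz, hH0, sub_zero, hpair x z] at this
      exact this
    have e3 : ‖z‖ ≤ eucNorm z := norm_le_eucNorm _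
    have : eucNorm (x - y) ≤ Real.sqrt d * (C2 * eucNorm z) := by
      calc eucNorm (x - y) ≤ Real.sqrt d * ‖x - y‖ := e1
        _ ≤ Real.sqrt d * (C2 * eucNorm z) := by
            apply mul_le_mul_of_nonneg_left _ hd
            exact e2.trans (mul_le_mul_of_nonneg_left e3 hC2n)
    simpa [mul_assoc, hz, hF] using this
  have hen1 : 0 ≤ eucNorm (x - y) := Real.sqrt_nonneg _
  have hen2 : 0 ≤ eucNorm (G.mul (G.inv x) y) := Real.sqrt_nonneg _
  constructor
  · nlinarith [mul_nonneg (mul_nonneg hd hC2n) hen1]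
  · nlinarith [mul_nonneg (mul_nonneg hd hC1n) hen2]
end
end

section
/- Let G = (ℝ^d, ·) be a group with polynomial multiplication and inversion and identity 0, whose left translations preserve Lebesgue measure, and let (δ_t)_{t>0} be straight dilations with exponents a₁,…,a_d > 0 forming an approximate group dilation structure for G. Let Γ be a subgroup of G admitting a bounded measurable set U ⊆ ℝ^d of positive Lebesgue measure such that the translates γ·U, γ ∈ Γ, pairwise intersect in Lebesgue-null sets. Then for every compact set K ⊆ ℝ^d there is a constant C(K) such that for every t ≥ 1 the set Γ ∩ δ_t(K) is finite and #(Γ ∩ δ_t(K)) ≤ C(K)·t^{a₁+⋯+a_d}. -/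
open Filter Topology MeasureTheory
open scoped ENNReal

noncomputable section

/-! ### Auxiliary lemmas -/

/-- If a finite power sum `∑ c e * t ^ e` converges as `t → ∞`, then all coefficients of
positive exponents vanish. -/
lemma key_vanish (s : Finset ℝ) (c : ℝ → ℝ) (L : ℝ)
    (h : Tendsto (fun t : ℝ => ∑ e ∈ s, c e * t ^ e) atTop (𝓝 L)) :
    ∀ e ∈ s, 0 < e → c e = 0 := by
  by_contra hc
  push_neg at hc
  obtain ⟨e₀, he₀s, he₀pos, he₀ne⟩ := hc
  classical
  set P : Finset ℝ := s.filter (fun e => 0 < e ∧ c e ≠ 0) with hP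
  have hPne : P.Nonempty := ⟨e₀, by simp [hP, he₀s, he₀pos, he₀ne]⟩
  set M := P.max' hPne with hM
  have hMP : M ∈ P := P.max'_mem hPne
  have hMs : M ∈ s := (Finset.mem_filter.mp hMP).1
  have hMpos : 0 < M := (Finset.mem_filter.mp hMP).2.1
  have hMne : c M ≠ 0 := (Finset.mem_filter.mp hMP).2.2
  have h1 : Tendsto (fun t : ℝ => (∑ e ∈ s, c e * t ^ e) * t ^ (-M)) atTop (𝓝 (c M)) := by
    have hcongr : ∀ᶠ t : ℝ in atTop,
        (∑ e ∈ s, c e * (t ^ (e - M))) = (∑ e ∈ s, c e * t ^ e) * t ^ (-M) := by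
      filter_upwards [eventually_gt_atTop (0:ℝ)] with t ht
      rw [Finset.sum_mul]
      refine Finset.sum_congr rfl fun e he => ?_
      rw [mul_assoc, ← Real.rpow_add ht]
      ring_nf
    refine Tendsto.congr' hcongr ?_
    have hsum : Tendsto (fun t : ℝ => ∑ e ∈ s, c e * t ^ (e - M)) atTop
        (𝓝 (∑ e ∈ s, if e = M then c M else 0)) := by
      refine tendsto_finset_sum _ fun e he => ?_
      by_cases hem : e = M
      · rw [if_pos hem, hem, sub_self]
        have : ∀ᶠ t : ℝ in atTop, c M = c M * t ^ (0:ℝ) := by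
          filter_upwards [eventually_gt_atTop (0:ℝ)] with t ht
          rw [Real.rpow_zero, mul_one]
        exact Tendsto.congr' this tendsto_const_nhds
      · rw [if_neg hem]
        by_cases hce : c e = 0
        · simpa [hce] using (tendsto_const_nhds :
            Tendsto (fun _ : ℝ => (0:ℝ)) atTop (𝓝 0))
        · have hneg : 0 < M - e := by
            rcases lt_or_ge 0 e with hpos | hle
            · have heP : e ∈ P := Finset.mem_filter.mpr ⟨he, hpos, hce⟩
              have hle' := P.le_max' e heP
              rcases lt_or_eq_of_le hle' with h' | h'
              · linarith
              · exact absurd h' hem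
            · linarith
          have := (tendsto_rpow_neg_atTop hneg).const_mul (c e)
          simpa [neg_sub] using this
    rw [Finset.sum_ite_eq' s M (fun _ => c M)] at hsum
    simpa [hMs] using hsum
  have h2 : Tendsto (fun t : ℝ => (∑ e ∈ s, c e * t ^ e) * t ^ (-M)) atTop (𝓝 (L * 0)) :=
    h.mul (tendsto_rpow_neg_atTop hMpos)
  have : c M = L * 0 := tendsto_nhds_unique h1 h2
  rw [mul_zero] at this
  exact hMne this

/-- A convergent finite power sum is uniformly bounded for `t ≥ 1`. -/
lemma key_bound (s : Finset ℝ) (c : ℝ → ℝ) (L : ℝ)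
    (h : Tendsto (fun t : ℝ => ∑ e ∈ s, c e * t ^ e) atTop (𝓝 L)) :
    ∀ t : ℝ, 1 ≤ t → |∑ e ∈ s, c e * t ^ e| ≤ ∑ e ∈ s, |c e| := by
  intro t ht
  refine (Finset.abs_sum_le_sum_abs _ _).trans (Finset.sum_le_sum fun e he => ?_)
  rcases le_or_gt e 0 with hle | hpos
  · rw [abs_mul]
    calc |c e| * |t ^ e| ≤ |c e| * 1 := by
          refine mul_le_mul_of_nonneg_left ?_ (abs_nonneg _)
          rw [abs_of_nonneg (Real.rpow_nonneg (by linarith) _)]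
          exact Real.rpow_le_one_of_one_le_of_nonpos ht hle
      _ = |c e| := mul_one _
  · rw [key_vanish s c L h e he hpos]
    simp

lemma rpow_sum' (t : ℝ) (ht : 0 < t) {ι : Type*} (s : Finset ι) (f : ι → ℝ) :
    t ^ (∑ i ∈ s, f i) = ∏ i ∈ s, t ^ f i := by
  classical
  induction s using Finset.induction with
  | empty => simp
  | insert _ _ h ih => rw [Finset.sum_insert h, Finset.prod_insert h, Real.rpow_add ht, ih]

/-- Expansion of a polynomial evaluated at dilated points as a power sum in `t`. -/
lemma eval_dil {d : ℕ} (a : Fin d → ℝ) (p : MvPolynomial (Fin d ⊕ Fin d) ℝ)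
    (x y : Fin d → ℝ) (b : ℝ) (t : ℝ) (ht : 0 < t) :
    (t⁻¹) ^ b * MvPolynomial.eval (Sum.elim (dil a t x) (dil a t y)) p
      = ∑ m ∈ p.support,
          (MvPolynomial.coeff m p * ∏ v ∈ m.support, (Sum.elim x y) v ^ m v)
            * t ^ ((∑ v ∈ m.support, (m v : ℝ) * Sum.elim a a v) - b) := by
  rw [MvPolynomial.eval_eq, Finset.mul_sum]
  refine Finset.sum_congr rfl fun m hm => ?_
  have helim : ∀ v, Sum.elim (dil a t x) (dil a t y) v
      = t ^ (Sum.elim a a v) * Sum.elim x y v := by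
    rintro (v | v) <;> rfl
  have hprod : ∏ v ∈ m.support, (Sum.elim (dil a t x) (dil a t y)) v ^ m v
      = t ^ (∑ v ∈ m.support, (m v : ℝ) * Sum.elim a a v)
          * ∏ v ∈ m.support, (Sum.elim x y) v ^ m v := by
    rw [rpow_sum' t ht, ← Finset.prod_mul_distrib]
    refine Finset.prod_congr rfl fun v hv => ?_
    rw [helim, mul_pow, ← Real.rpow_natCast (t ^ (Sum.elim a a v)) (m v),
      ← Real.rpow_mul ht.le]
    ring_nf
  rw [hprod, Real.inv_rpow ht.le, ← Real.rpow_neg ht.le]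
  rw [show (∑ v ∈ m.support, (m v : ℝ) * Sum.elim a a v) - b
      = (∑ v ∈ m.support, (m v : ℝ) * Sum.elim a a v) + (-b) from by ring,
    Real.rpow_add ht]
  ring

/-- Uniform bound on products of dilated points, for `t ≥ 1`, on bounded sets. -/
lemma unif_bound {d : ℕ} (G : PolyGroup d) (D : ApproxDil d G) (Mb : ℝ) (hMb : 0 ≤ Mb) :
    ∃ C : ℝ, 0 ≤ C ∧ ∀ t : ℝ, 1 ≤ t → ∀ x y : Fin d → ℝ,
      (∀ j, |x j| ≤ Mb) → (∀ j, |y j| ≤ Mb) → ∀ i,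
      |G.mul (dil D.a t x) (dil D.a t y) i| ≤ C * t ^ D.a i := by
  classical
  choose p hp using G.poly_mul
  set Ci : Fin d → ℝ := fun i => ∑ m ∈ (p i).support,
    |MvPolynomial.coeff m (p i)| * Mb ^ (∑ v ∈ m.support, m v) with hCi
  have hCinonneg : ∀ i, 0 ≤ Ci i := fun i => Finset.sum_nonneg fun m _ =>
    mul_nonneg (abs_nonneg _) (pow_nonneg hMb _)
  refine ⟨∑ i, Ci i, Finset.sum_nonneg fun i _ => hCinonneg i, ?_⟩
  intro t ht x y hx hy i
  have ht0 : (0:ℝ) < t := lt_of_lt_of_le one_pos ht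
  set e : ((Fin d ⊕ Fin d) →₀ ℕ) → ℝ :=
    fun m => (∑ v ∈ m.support, (m v : ℝ) * Sum.elim D.a D.a v) - D.a i with he
  set c : ((Fin d ⊕ Fin d) →₀ ℕ) → ℝ :=
    fun m => MvPolynomial.coeff m (p i) * ∏ v ∈ m.support, Sum.elim x y v ^ m v with hc
  set E : Finset ℝ := (p i).support.image e with hE
  set cE : ℝ → ℝ := fun ε => ∑ m ∈ (p i).support.filter (fun m => e m = ε), c m with hcE
  have hform : ∀ s : ℝ, 0 < s → (∑ ε ∈ E, cE ε * s ^ ε)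
      = s⁻¹ ^ D.a i * G.mul (dil D.a s x) (dil D.a s y) i := by
    intro s hs
    rw [hp i, eval_dil D.a (p i) x y (D.a i) s hs,
      ← Finset.sum_fiberwise_of_maps_to (fun m hm => Finset.mem_image_of_mem e hm)
        (fun m => c m * s ^ e m)]
    refine Finset.sum_congr rfl fun ε hε => ?_
    rw [hcE, Finset.sum_mul]
    refine Finset.sum_congr rfl fun m hm => ?_
    rw [(Finset.mem_filter.mp hm).2]
  have htend : Tendsto (fun s : ℝ => ∑ ε ∈ E, cE ε * s ^ ε) atTop (𝓝 (D.bullet x y i)) := by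
    have h0 := tendsto_pi_nhds.mp (D.tendsto_mul x y) i
    refine Tendsto.congr' ?_ h0
    filter_upwards [eventually_gt_atTop (0:ℝ)] with s hs
    exact (hform s hs).symm
  have hbd := key_bound E cE _ htend t ht
  rw [hform t ht0] at hbd
  have hzbd : ∀ v : Fin d ⊕ Fin d, |Sum.elim x y v| ≤ Mb := by
    rintro (v | v)
    · exact hx v
    · exact hy v
  have h2 : ∑ ε ∈ E, |cE ε| ≤ Ci i := by
    have hstep : ∑ ε ∈ E, |cE ε| ≤ ∑ m ∈ (p i).support, |c m| := by
      rw [← Finset.sum_fiberwise_of_maps_to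
        (fun m hm => Finset.mem_image_of_mem e hm) (fun m => |c m|)]
      exact Finset.sum_le_sum fun ε _ => Finset.abs_sum_le_sum_abs _ _
    refine hstep.trans (Finset.sum_le_sum fun m hm => ?_)
    rw [hc, abs_mul]
    refine mul_le_mul_of_nonneg_left ?_ (abs_nonneg _)
    rw [Finset.abs_prod, ← Finset.prod_pow_eq_pow_sum]
    refine Finset.prod_le_prod (fun v _ => by positivity) (fun v _ => ?_)
    rw [abs_pow]
    exact pow_le_pow_left₀ (abs_nonneg _) (hzbd v) _
  have h3 : |t⁻¹ ^ D.a i * G.mul (dil D.a t x) (dil D.a t y) i| ≤ ∑ i, Ci i :=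
    (hbd.trans h2).trans (Finset.single_le_sum (fun j _ => hCinonneg j) (Finset.mem_univ i))
  have hpos : (0:ℝ) < t ^ D.a i := Real.rpow_pos_of_pos ht0 _
  have hkey : |G.mul (dil D.a t x) (dil D.a t y) i|
      = t ^ D.a i * |t⁻¹ ^ D.a i * G.mul (dil D.a t x) (dil D.a t y) i| := by
    rw [abs_mul, Real.inv_rpow ht0.le, abs_of_nonneg (inv_nonneg.mpr hpos.le),
      ← mul_assoc, mul_inv_cancel₀ hpos.ne', one_mul]
  rw [hkey, mul_comm ((∑ i, Ci i)) (t ^ D.a i)]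
  exact mul_le_mul_of_nonneg_left h3 hpos.le

theorem stmt_14 (d : ℕ) (G : PolyGroup d)
    (hHaar : ∀ x, MeasurePreserving (fun y => G.mul x y) volume volume)
    (D : ApproxDil d G)
    (Γ : Set (Fin d → ℝ)) (hΓ0 : (0 : Fin d → ℝ) ∈ Γ)
    (hΓmul : ∀ x ∈ Γ, ∀ y ∈ Γ, G.mul x y ∈ Γ) (hΓinv : ∀ x ∈ Γ, G.inv x ∈ Γ)
    (U : Set (Fin d → ℝ)) (hUmeas : MeasurableSet U) (hUbdd : Bornology.IsBounded U)
    (hUpos : 0 < volume U)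
    (hUdisj : ∀ γ ∈ Γ, ∀ γ' ∈ Γ, γ ≠ γ' →
      volume (((fun y => G.mul γ y) '' U) ∩ ((fun y => G.mul γ' y) '' U)) = 0)
    (K : Set (Fin d → ℝ)) (hK : IsCompact K) :
    ∃ C : ℝ, ∀ t : ℝ, 1 ≤ t →
      (Γ ∩ dil D.a t '' K).Finite ∧
      ((Γ ∩ dil D.a t '' K).ncard : ℝ) ≤ C * t ^ (∑ i, D.a i) := by
  classical
  -- a common bound for K and U
  obtain ⟨M0, hM0⟩ := (isBounded_iff_forall_norm_le).mp (hK.isBounded.union hUbdd)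
  set Mb : ℝ := max M0 0 with hMbdef
  have hMb : 0 ≤ Mb := le_max_right _ _
  have hKbd : ∀ x ∈ K, ∀ j, |x j| ≤ Mb := fun x hx j =>
    ((norm_le_pi_norm x j).trans (hM0 x (Set.mem_union_left _ hx))).trans (le_max_left _ _)
  have hUbd : ∀ u ∈ U, ∀ j, |u j| ≤ Mb := fun u hu j =>
    ((norm_le_pi_norm u j).trans (hM0 u (Set.mem_union_right _ hu))).trans (le_max_left _ _)
  obtain ⟨C₀, hC₀nn, hC₀⟩ := unif_bound G D Mb hMb
  -- volume of U
  have hUfin : volume U < ⊤ := hUbdd.measure_lt_top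
  set vr : ℝ := (volume U).toReal with hvrdef
  have hvr : 0 < vr := ENNReal.toReal_pos hUpos.ne' hUfin.ne
  refine ⟨(2 * C₀) ^ d / vr, fun t ht => ?_⟩
  have ht0 : (0:ℝ) < t := lt_of_lt_of_le one_pos ht
  set W : ℝ := (2 * C₀) ^ d * t ^ (∑ i, D.a i) with hWdef
  have hWnn : 0 ≤ W := mul_nonneg (pow_nonneg (by linarith) _) (Real.rpow_nonneg ht0.le _)
  -- the translate sets
  set f : (Fin d → ℝ) → Set (Fin d → ℝ) := fun γ => (fun y => G.mul γ y) '' U with hfdef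
  have himg : ∀ γ, f γ = (fun y => G.mul (G.inv γ) y) ⁻¹' U := by
    intro γ
    ext w
    simp only [hfdef, Set.mem_image, Set.mem_preimage]
    constructor
    · rintro ⟨u, hu, rfl⟩
      rwa [← G.mul_assoc', G.inv_mul', G.zero_mul']
    · intro hw
      exact ⟨G.mul (G.inv γ) w, hw, by rw [← G.mul_assoc', G.mul_inv', G.zero_mul']⟩
  have hmeasf : ∀ γ, NullMeasurableSet (f γ) volume := fun γ => by
    rw [himg]
    exact ((hHaar (G.inv γ)).measurable hUmeas).nullMeasurableSet
  have hvolf : ∀ γ, volume (f γ) = volume U := fun γ => by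
    rw [himg]
    exact (hHaar (G.inv γ)).measure_preimage hUmeas.nullMeasurableSet
  -- the big box
  set B : Set (Fin d → ℝ) :=
    Set.univ.pi fun i => Set.Icc (-(C₀ * t ^ D.a i)) (C₀ * t ^ D.a i) with hBdef
  have hsubB : ∀ γ ∈ Γ ∩ dil D.a t '' K, f γ ⊆ B := by
    rintro γ ⟨hγΓ, x, hxK, rfl⟩ w ⟨u, hu, rfl⟩
    set y : Fin d → ℝ := dil D.a t⁻¹ u with hydef
    have hyu : dil D.a t y = u := by
      funext j
      show t ^ D.a j * (t⁻¹ ^ D.a j * u j) = u j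
      rw [Real.inv_rpow ht0.le, ← mul_assoc,
        mul_inv_cancel₀ (Real.rpow_pos_of_pos ht0 _).ne', one_mul]
    have hybd : ∀ j, |y j| ≤ Mb := by
      intro j
      have h1 : |y j| = t⁻¹ ^ D.a j * |u j| := by
        rw [hydef]
        show |t⁻¹ ^ D.a j * u j| = _
        rw [abs_mul, abs_of_nonneg (Real.rpow_nonneg (inv_nonneg.mpr ht0.le) _)]
      rw [h1]
      calc t⁻¹ ^ D.a j * |u j| ≤ 1 * |u j| := by
            refine mul_le_mul_of_nonneg_right ?_ (abs_nonneg _)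
            exact Real.rpow_le_one (inv_nonneg.mpr ht0.le)
              (inv_le_one_of_one_le₀ ht) (D.a_pos j).le
        _ = |u j| := one_mul _
        _ ≤ Mb := hUbd u hu j
    intro i _
    rw [← hyu]
    have hb := hC₀ t ht x y (hKbd x hxK) hybd i
    rw [Set.mem_Icc]
    constructor
    · linarith [neg_abs_le (G.mul (dil D.a t x) (dil D.a t y) i), hb]
    · linarith [le_abs_self (G.mul (dil D.a t x) (dil D.a t y) i)]
  have hvolB : volume B ≤ ENNReal.ofReal W := by
    rw [hBdef, volume_pi_pi]
    have heq : ∀ i : Fin d, volume (Set.Icc (-(C₀ * t ^ D.a i)) (C₀ * t ^ D.a i))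
        = ENNReal.ofReal (2 * C₀ * t ^ D.a i) := by
      intro i
      rw [Real.volume_Icc]
      congr 1
      ring
    rw [Finset.prod_congr rfl fun i _ => heq i,
      ← ENNReal.ofReal_prod_of_nonneg (fun i _ => by positivity)]
    refine ENNReal.ofReal_le_ofReal ?_
    rw [hWdef]
    rw [rpow_sum' t ht0]
    rw [Finset.prod_mul_distrib, Finset.prod_const, Finset.card_univ, Fintype.card_fin]
  -- the counting estimate for finite subsets
  have hcard : ∀ s : Finset (Fin d → ℝ), ↑s ⊆ Γ ∩ dil D.a t '' K →
      (s.card : ℝ) ≤ (2 * C₀) ^ d / vr * t ^ (∑ i, D.a i) := by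
    intro s hs
    have hdisj : (↑s : Set (Fin d → ℝ)).Pairwise (Function.onFun (AEDisjoint volume) f) := by
      intro γ hγ γ' hγ' hne
      exact hUdisj γ (hs hγ).1 γ' (hs hγ').1 hne
    have hunion : (⋃ γ ∈ s, f γ) ⊆ B := by
      refine Set.iUnion₂_subset fun γ hγ => hsubB γ (hs hγ)
    have hle : (s.card : ℝ≥0∞) * volume U ≤ ENNReal.ofReal W := by
      calc (s.card : ℝ≥0∞) * volume U = ∑ γ ∈ s, volume (f γ) := by
            rw [Finset.sum_congr rfl fun γ _ => hvolf γ, Finset.sum_const, nsmul_eq_mul]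
        _ = volume (⋃ γ ∈ s, f γ) :=
            (measure_biUnion_finset₀ hdisj (fun γ _ => hmeasf γ)).symm
        _ ≤ volume B := measure_mono hunion
        _ ≤ ENNReal.ofReal W := hvolB
    have hreal : (s.card : ℝ) * vr ≤ W := by
      have h1 := ENNReal.toReal_mono (by simp) hle
      rw [ENNReal.toReal_mul, ENNReal.toReal_ofReal hWnn] at h1
      simpa using h1
    rw [div_mul_eq_mul_div, le_div_iff₀ hvr]
    calc (s.card : ℝ) * vr ≤ W := hreal
      _ = (2 * C₀) ^ d * t ^ (∑ i, D.a i) := rfl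
  -- finiteness
  have hfin : (Γ ∩ dil D.a t '' K).Finite := by
    by_contra hinf
    have hinf' : (Γ ∩ dil D.a t '' K).Infinite := hinf
    obtain ⟨s, hssub, hscard⟩ :=
      hinf'.exists_subset_card_eq (⌈(2 * C₀) ^ d / vr * t ^ (∑ i, D.a i)⌉₊ + 1)
    have h1 := hcard s hssub
    rw [hscard] at h1
    have h2 : ((2 * C₀) ^ d / vr * t ^ (∑ i, D.a i))
        ≤ (⌈(2 * C₀) ^ d / vr * t ^ (∑ i, D.a i)⌉₊ : ℝ) := Nat.le_ceil _
    push_cast at h1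
    linarith
  refine ⟨hfin, ?_⟩
  have := hcard hfin.toFinset (by simp)
  rw [Set.ncard_eq_toFinset_card _ hfin]
  exact this
end
end

section
/- On ℝ⁶ define the product (x₁,…,x₆)·(y₁,…,y₆) = (x₁+y₁, x₂+y₂, x₃+y₃, x₄+y₄+x₁y₂, x₅+y₅+x₂y₃, x₆+y₆+x₁y₅+x₄y₃), which makes ℝ⁶ a group with identity 0 (the group of 4×4 real unipotent upper-triangular matrices, with x₁,x₂,x₃ the first superdiagonal entries, x₄,x₅ the second superdiagonal entries, and x₆ the top-right entry). For b₁,…,b₆ > 0 and t > 0 let δ_t(x) = (t^{b₁}x₁,…,t^{b₆}x₆). Then: (i) δ_t is a group homomorphism for every t > 0 if and only if b₄ = b₁+b₂, b₅ = b₂+b₃, b₆ = b₁+b₅, and b₆ = b₄+b₃; (ii) for all x,y ∈ ℝ⁶ the limits lim_{t→∞} δ_{1/t}(δ_t(x)·δ_t(y)) and lim_{t→∞} δ_{1/t}((δ_t(x))⁻¹) exist if and only if b₄ ≥ b₁+b₂, b₅ ≥ b₂+b₃, b₆ ≥ b₁+b₅, and b₆ ≥ b₄+b₃. -/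
open Filter Topology

noncomputable section

/-- The product of `𝕌₄(ℝ)` in the coordinates
`x₁ = x_{12}, x₂ = x_{23}, x₃ = x_{34}, x₄ = x_{13}, x₅ = x_{24}, x₆ = x_{14}`
(Lean indices `0,…,5`). -/
def umul (x y : Fin 6 → ℝ) : Fin 6 → ℝ :=
  ![x 0 + y 0, x 1 + y 1, x 2 + y 2,
    x 3 + y 3 + x 0 * y 1, x 4 + y 4 + x 1 * y 2,
    x 5 + y 5 + x 0 * y 4 + x 3 * y 2]

/-- The inverse map of `𝕌₄(ℝ)` in the same coordinates. -/
def uinv (x : Fin 6 → ℝ) : Fin 6 → ℝ :=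
  ![-x 0, -x 1, -x 2,
    -x 3 + x 0 * x 1, -x 4 + x 1 * x 2,
    -x 5 + x 0 * x 4 - x 0 * x 1 * x 2 + x 2 * x 3]

/-- The straight dilations `δ_t(x) = (t^{b i} * x i)_i` on `ℝ⁶`. -/
def udil (b : Fin 6 → ℝ) (t : ℝ) (x : Fin 6 → ℝ) : Fin 6 → ℝ :=
  fun i => t ^ b i * x i


lemma vec6_0 {a} (x y z u v w : a) : ![x,y,z,u,v,w] 0 = x := rfl
lemma vec6_1 {a} (x y z u v w : a) : ![x,y,z,u,v,w] 1 = y := rfl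
lemma vec6_2 {a} (x y z u v w : a) : ![x,y,z,u,v,w] 2 = z := rfl
lemma vec6_3 {a} (x y z u v w : a) : ![x,y,z,u,v,w] 3 = u := rfl
lemma vec6_4 {a} (x y z u v w : a) : ![x,y,z,u,v,w] 4 = v := rfl
lemma vec6_5 {a} (x y z u v w : a) : ![x,y,z,u,v,w] 5 = w := rfl
lemma fmk0 (h : 0 < 6) : (⟨0, h⟩ : Fin 6) = 0 := rfl
lemma fmk1 (h : 1 < 6) : (⟨1, h⟩ : Fin 6) = 1 := rfl
lemma fmk2 (h : 2 < 6) : (⟨2, h⟩ : Fin 6) = 2 := rfl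
lemma fmk3 (h : 3 < 6) : (⟨3, h⟩ : Fin 6) = 3 := rfl
lemma fmk4 (h : 4 < 6) : (⟨4, h⟩ : Fin 6) = 4 := rfl
lemma fmk5 (h : 5 < 6) : (⟨5, h⟩ : Fin 6) = 5 := rfl
lemma umul0 (x y : Fin 6 → ℝ) : umul x y 0 = x 0 + y 0 := rfl
lemma umul1 (x y : Fin 6 → ℝ) : umul x y 1 = x 1 + y 1 := rfl
lemma umul2 (x y : Fin 6 → ℝ) : umul x y 2 = x 2 + y 2 := rfl
lemma umul3 (x y : Fin 6 → ℝ) : umul x y 3 = x 3 + y 3 + x 0 * y 1 := rfl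
lemma umul4 (x y : Fin 6 → ℝ) : umul x y 4 = x 4 + y 4 + x 1 * y 2 := rfl
lemma umul5 (x y : Fin 6 → ℝ) : umul x y 5 = x 5 + y 5 + x 0 * y 4 + x 3 * y 2 := rfl
lemma uinv0 (x : Fin 6 → ℝ) : uinv x 0 = -x 0 := rfl
lemma uinv1 (x : Fin 6 → ℝ) : uinv x 1 = -x 1 := rfl
lemma uinv2 (x : Fin 6 → ℝ) : uinv x 2 = -x 2 := rfl
lemma uinv3 (x : Fin 6 → ℝ) : uinv x 3 = -x 3 + x 0 * x 1 := rfl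
lemma uinv4 (x : Fin 6 → ℝ) : uinv x 4 = -x 4 + x 1 * x 2 := rfl
lemma uinv5 (x : Fin 6 → ℝ) : uinv x 5 = -x 5 + x 0 * x 4 - x 0 * x 1 * x 2 + x 2 * x 3 := rfl
lemma udil_apply (b : Fin 6 → ℝ) (t : ℝ) (x : Fin 6 → ℝ) (i : Fin 6) :
    udil b t x i = t ^ b i * x i := rfl

lemma rpow_eq_iff' {a c : ℝ} (h : (2:ℝ) ^ a = 2 ^ c) : a = c := by
  have h2 : (0:ℝ) < 2 := two_pos
  have h' := congrArg Real.log h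
  rw [Real.log_rpow h2, Real.log_rpow h2] at h'
  exact mul_right_cancel₀ (by positivity : Real.log 2 ≠ 0) h'

lemma exlim (c : ℝ) (hc : c ≤ 0) : ∃ l, Tendsto (fun t : ℝ => t ^ c) atTop (𝓝 l) := by
  rcases eq_or_lt_of_le hc with h | h
  · exact ⟨1, by simp [h]⟩
  · exact ⟨0, by simpa using tendsto_rpow_neg_atTop (neg_pos.2 h)⟩

lemma limgen (a c1 c2 c3 m1 m2 m3 : ℝ) (h1 : c1 ≤ 0) (h2 : c2 ≤ 0) (h3 : c3 ≤ 0) :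
    ∃ l, Tendsto (fun t : ℝ => a + t ^ c1 * m1 + t ^ c2 * m2 + t ^ c3 * m3) atTop (𝓝 l) := by
  obtain ⟨l1, hl1⟩ := exlim c1 h1
  obtain ⟨l2, hl2⟩ := exlim c2 h2
  obtain ⟨l3, hl3⟩ := exlim c3 h3
  exact ⟨_, ((tendsto_const_nhds.add (hl1.mul tendsto_const_nhds)).add
      (hl2.mul tendsto_const_nhds)).add (hl3.mul tendsto_const_nhds)⟩

lemma exlim_congr {f g : ℝ → ℝ} (h : ∀ t : ℝ, 0 < t → f t = g t)
    (hg : ∃ l, Tendsto g atTop (𝓝 l)) : ∃ l, Tendsto f atTop (𝓝 l) := by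
  obtain ⟨l, hl⟩ := hg
  refine ⟨l, hl.congr' ?_⟩
  filter_upwards [eventually_gt_atTop (0:ℝ)] with t ht
  exact (h t ht).symm

lemma nonpos_of_lim {c : ℝ} (h : ∃ l, Tendsto (fun t : ℝ => t ^ c) atTop (𝓝 l)) : c ≤ 0 := by
  by_contra hc
  push_neg at hc
  obtain ⟨l, hl⟩ := h
  exact not_tendsto_nhds_of_tendsto_atTop (tendsto_rpow_atTop hc) l hl

lemma pihelper {f : ℝ → Fin 6 → ℝ} (h : ∀ i, ∃ l, Tendsto (fun t => f t i) atTop (𝓝 l)) :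
    ∃ L, Tendsto f atTop (𝓝 L) := by
  choose l hl using h
  exact ⟨l, tendsto_pi_nhds.2 hl⟩


theorem stmt_19 (b : Fin 6 → ℝ) (hb : ∀ i, 0 < b i) :
    (∀ x y z, umul (umul x y) z = umul x (umul y z)) ∧
    (∀ x, umul x 0 = x) ∧ (∀ x, umul 0 x = x) ∧
    (∀ x, umul x (uinv x) = 0) ∧ (∀ x, umul (uinv x) x = 0) ∧
    ((∀ t : ℝ, 0 < t → ∀ x y, udil b t (umul x y) = umul (udil b t x) (udil b t y)) ↔
      (b 3 = b 0 + b 1 ∧ b 4 = b 1 + b 2 ∧ b 5 = b 0 + b 4 ∧ b 5 = b 3 + b 2)) ∧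
    (((∀ x y, ∃ L, Tendsto
          (fun t : ℝ => udil b t⁻¹ (umul (udil b t x) (udil b t y))) atTop (𝓝 L)) ∧
      (∀ x, ∃ L, Tendsto
          (fun t : ℝ => udil b t⁻¹ (uinv (udil b t x))) atTop (𝓝 L))) ↔
      (b 0 + b 1 ≤ b 3 ∧ b 1 + b 2 ≤ b 4 ∧ b 0 + b 4 ≤ b 5 ∧ b 3 + b 2 ≤ b 5)) := by
  refine ⟨?_, ?_, ?_, ?_, ?_, ?_, ?_⟩
  · intro x y z; funext i; fin_cases i <;>
      simp only [fmk0, fmk1, fmk2, fmk3, fmk4, fmk5, umul0, umul1, umul2, umul3, umul4,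
        umul5, Pi.zero_apply] <;> ring
  · intro x; funext i; fin_cases i <;>
      simp only [fmk0, fmk1, fmk2, fmk3, fmk4, fmk5, umul0, umul1, umul2, umul3, umul4,
        umul5, Pi.zero_apply] <;> ring
  · intro x; funext i; fin_cases i <;>
      simp only [fmk0, fmk1, fmk2, fmk3, fmk4, fmk5, umul0, umul1, umul2, umul3, umul4,
        umul5, Pi.zero_apply] <;> ring
  · intro x; funext i; fin_cases i <;>
      simp only [fmk0, fmk1, fmk2, fmk3, fmk4, fmk5, umul0, umul1, umul2, umul3, umul4,
        umul5, uinv0, uinv1, uinv2, uinv3, uinv4, uinv5, Pi.zero_apply] <;> ring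
  · intro x; funext i; fin_cases i <;>
      simp only [fmk0, fmk1, fmk2, fmk3, fmk4, fmk5, umul0, umul1, umul2, umul3, umul4,
        umul5, uinv0, uinv1, uinv2, uinv3, uinv4, uinv5, Pi.zero_apply] <;> ring
  · constructor
    · intro h
      have h2 := h 2 two_pos
      refine ⟨?_, ?_, ?_, ?_⟩
      · have := congrFun (h2 ![1,0,0,0,0,0] ![0,1,0,0,0,0]) 3
        simp only [umul3, udil_apply, umul0, umul1, vec6_0, vec6_1, vec6_2, vec6_3,
          vec6_4, vec6_5] at this
        norm_num at this
        rw [← Real.rpow_add two_pos] at this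
        exact rpow_eq_iff' this
      · have := congrFun (h2 ![0,1,0,0,0,0] ![0,0,1,0,0,0]) 4
        simp only [umul4, udil_apply, umul1, umul2, vec6_0, vec6_1, vec6_2, vec6_3,
          vec6_4, vec6_5] at this
        norm_num at this
        rw [← Real.rpow_add two_pos] at this
        exact rpow_eq_iff' this
      · have := congrFun (h2 ![1,0,0,0,0,0] ![0,0,0,0,1,0]) 5
        simp only [umul5, udil_apply, umul0, umul4, umul3, umul2, vec6_0, vec6_1, vec6_2,
          vec6_3, vec6_4, vec6_5] at this
        norm_num at this
        rw [← Real.rpow_add two_pos] at this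
        exact rpow_eq_iff' this
      · have := congrFun (h2 ![0,0,0,1,0,0] ![0,0,1,0,0,0]) 5
        simp only [umul5, udil_apply, umul0, umul4, umul3, umul2, vec6_0, vec6_1, vec6_2,
          vec6_3, vec6_4, vec6_5] at this
        norm_num at this
        rw [← Real.rpow_add two_pos] at this
        exact rpow_eq_iff' this
    · rintro ⟨h3, h4, h5, h5'⟩ t ht x y
      have e3 : t ^ b 3 = t ^ b 0 * t ^ b 1 := by rw [h3, Real.rpow_add ht]
      have e4 : t ^ b 4 = t ^ b 1 * t ^ b 2 := by rw [h4, Real.rpow_add ht]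
      have e5 : t ^ b 5 = t ^ b 0 * t ^ b 4 := by rw [h5, Real.rpow_add ht]
      have e5' : t ^ b 5 = t ^ b 3 * t ^ b 2 := by rw [h5', Real.rpow_add ht]
      funext i; fin_cases i <;>
        simp only [fmk0, fmk1, fmk2, fmk3, fmk4, fmk5, umul0, umul1, umul2, umul3, umul4,
          umul5, udil_apply]
      · ring
      · ring
      · ring
      · linear_combination (x 0 * y 1) * e3
      · linear_combination (x 1 * y 2) * e4
      · linear_combination (x 0 * y 4) * e5 + (x 3 * y 2) * e5'
  · constructor
    · rintro ⟨hmul, -⟩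
      refine ⟨sub_nonpos.1 ?_, sub_nonpos.1 ?_, sub_nonpos.1 ?_, sub_nonpos.1 ?_⟩
      · obtain ⟨L, hL⟩ := hmul ![1,0,0,0,0,0] ![0,1,0,0,0,0]
        refine nonpos_of_lim ⟨L 3, ((tendsto_pi_nhds.1 hL 3).congr' ?_)⟩
        filter_upwards [eventually_gt_atTop (0:ℝ)] with t ht
        have hne : ∀ a : ℝ, t ^ a ≠ 0 := fun a => (Real.rpow_pos_of_pos ht a).ne'
        simp only [udil_apply, umul3, vec6_0, vec6_1, vec6_2, vec6_3, vec6_4, vec6_5,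
          Real.rpow_sub ht, Real.rpow_add ht, Real.inv_rpow ht.le]
        field_simp; ring
      · obtain ⟨L, hL⟩ := hmul ![0,1,0,0,0,0] ![0,0,1,0,0,0]
        refine nonpos_of_lim ⟨L 4, ((tendsto_pi_nhds.1 hL 4).congr' ?_)⟩
        filter_upwards [eventually_gt_atTop (0:ℝ)] with t ht
        have hne : ∀ a : ℝ, t ^ a ≠ 0 := fun a => (Real.rpow_pos_of_pos ht a).ne'
        simp only [udil_apply, umul4, vec6_0, vec6_1, vec6_2, vec6_3, vec6_4, vec6_5,
          Real.rpow_sub ht, Real.rpow_add ht, Real.inv_rpow ht.le]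
        field_simp; ring
      · obtain ⟨L, hL⟩ := hmul ![1,0,0,0,0,0] ![0,0,0,0,1,0]
        refine nonpos_of_lim ⟨L 5, ((tendsto_pi_nhds.1 hL 5).congr' ?_)⟩
        filter_upwards [eventually_gt_atTop (0:ℝ)] with t ht
        have hne : ∀ a : ℝ, t ^ a ≠ 0 := fun a => (Real.rpow_pos_of_pos ht a).ne'
        simp only [udil_apply, umul5, vec6_0, vec6_1, vec6_2, vec6_3, vec6_4, vec6_5,
          Real.rpow_sub ht, Real.rpow_add ht, Real.inv_rpow ht.le]
        field_simp; ring
      · obtain ⟨L, hL⟩ := hmul ![0,0,0,1,0,0] ![0,0,1,0,0,0]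
        refine nonpos_of_lim ⟨L 5, ((tendsto_pi_nhds.1 hL 5).congr' ?_)⟩
        filter_upwards [eventually_gt_atTop (0:ℝ)] with t ht
        have hne : ∀ a : ℝ, t ^ a ≠ 0 := fun a => (Real.rpow_pos_of_pos ht a).ne'
        simp only [udil_apply, umul5, vec6_0, vec6_1, vec6_2, vec6_3, vec6_4, vec6_5,
          Real.rpow_sub ht, Real.rpow_add ht, Real.inv_rpow ht.le]
        field_simp; ring
    · rintro ⟨h1, h2, h3, h4⟩
      have hz : (0:ℝ) ≤ 0 := le_refl 0
      have h5 : b 0 + b 1 + b 2 - b 5 ≤ 0 := by linarith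
      constructor
      · intro x y
        apply pihelper
        intro i
        fin_cases i
        · refine exlim_congr
            (g := fun t => (x 0 + y 0) + t ^ (0:ℝ) * 0 + t ^ (0:ℝ) * 0 + t ^ (0:ℝ) * 0)
            (fun t ht => ?_) (limgen _ _ _ _ _ _ _ hz hz hz)
          have hne : ∀ a : ℝ, t ^ a ≠ 0 := fun a => (Real.rpow_pos_of_pos ht a).ne'
          simp only [fmk0, udil_apply, umul0, Real.rpow_zero, Real.inv_rpow ht.le]
          field_simp; ring
        · refine exlim_congr
            (g := fun t => (x 1 + y 1) + t ^ (0:ℝ) * 0 + t ^ (0:ℝ) * 0 + t ^ (0:ℝ) * 0)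
            (fun t ht => ?_) (limgen _ _ _ _ _ _ _ hz hz hz)
          have hne : ∀ a : ℝ, t ^ a ≠ 0 := fun a => (Real.rpow_pos_of_pos ht a).ne'
          simp only [fmk1, udil_apply, umul1, Real.rpow_zero, Real.inv_rpow ht.le]
          field_simp; ring
        · refine exlim_congr
            (g := fun t => (x 2 + y 2) + t ^ (0:ℝ) * 0 + t ^ (0:ℝ) * 0 + t ^ (0:ℝ) * 0)
            (fun t ht => ?_) (limgen _ _ _ _ _ _ _ hz hz hz)
          have hne : ∀ a : ℝ, t ^ a ≠ 0 := fun a => (Real.rpow_pos_of_pos ht a).ne'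
          simp only [fmk2, udil_apply, umul2, Real.rpow_zero, Real.inv_rpow ht.le]
          field_simp; ring
        · refine exlim_congr
            (g := fun t => (x 3 + y 3) + t ^ (b 0 + b 1 - b 3) * (x 0 * y 1)
              + t ^ (0:ℝ) * 0 + t ^ (0:ℝ) * 0)
            (fun t ht => ?_) (limgen _ _ _ _ _ _ _ (by linarith) hz hz)
          have hne : ∀ a : ℝ, t ^ a ≠ 0 := fun a => (Real.rpow_pos_of_pos ht a).ne'
          simp only [fmk3, udil_apply, umul3, Real.rpow_zero, Real.rpow_sub ht,
            Real.rpow_add ht, Real.inv_rpow ht.le]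
          field_simp; ring
        · refine exlim_congr
            (g := fun t => (x 4 + y 4) + t ^ (b 1 + b 2 - b 4) * (x 1 * y 2)
              + t ^ (0:ℝ) * 0 + t ^ (0:ℝ) * 0)
            (fun t ht => ?_) (limgen _ _ _ _ _ _ _ (by linarith) hz hz)
          have hne : ∀ a : ℝ, t ^ a ≠ 0 := fun a => (Real.rpow_pos_of_pos ht a).ne'
          simp only [fmk4, udil_apply, umul4, Real.rpow_zero, Real.rpow_sub ht,
            Real.rpow_add ht, Real.inv_rpow ht.le]
          field_simp; ring
        · refine exlim_congr
            (g := fun t => (x 5 + y 5) + t ^ (b 0 + b 4 - b 5) * (x 0 * y 4)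
              + t ^ (b 3 + b 2 - b 5) * (x 3 * y 2) + t ^ (0:ℝ) * 0)
            (fun t ht => ?_) (limgen _ _ _ _ _ _ _ (by linarith) (by linarith) hz)
          have hne : ∀ a : ℝ, t ^ a ≠ 0 := fun a => (Real.rpow_pos_of_pos ht a).ne'
          simp only [fmk5, udil_apply, umul5, Real.rpow_zero, Real.rpow_sub ht,
            Real.rpow_add ht, Real.inv_rpow ht.le]
          field_simp; ring
      · intro x
        apply pihelper
        intro i
        fin_cases i
        · refine exlim_congr
            (g := fun t => (-x 0) + t ^ (0:ℝ) * 0 + t ^ (0:ℝ) * 0 + t ^ (0:ℝ) * 0)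
            (fun t ht => ?_) (limgen _ _ _ _ _ _ _ hz hz hz)
          have hne : ∀ a : ℝ, t ^ a ≠ 0 := fun a => (Real.rpow_pos_of_pos ht a).ne'
          simp only [fmk0, udil_apply, uinv0, Real.rpow_zero, Real.inv_rpow ht.le]
          field_simp
          ring
        · refine exlim_congr
            (g := fun t => (-x 1) + t ^ (0:ℝ) * 0 + t ^ (0:ℝ) * 0 + t ^ (0:ℝ) * 0)
            (fun t ht => ?_) (limgen _ _ _ _ _ _ _ hz hz hz)
          have hne : ∀ a : ℝ, t ^ a ≠ 0 := fun a => (Real.rpow_pos_of_pos ht a).ne'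
          simp only [fmk1, udil_apply, uinv1, Real.rpow_zero, Real.inv_rpow ht.le]
          field_simp
          ring
        · refine exlim_congr
            (g := fun t => (-x 2) + t ^ (0:ℝ) * 0 + t ^ (0:ℝ) * 0 + t ^ (0:ℝ) * 0)
            (fun t ht => ?_) (limgen _ _ _ _ _ _ _ hz hz hz)
          have hne : ∀ a : ℝ, t ^ a ≠ 0 := fun a => (Real.rpow_pos_of_pos ht a).ne'
          simp only [fmk2, udil_apply, uinv2, Real.rpow_zero, Real.inv_rpow ht.le]
          field_simp
          ring
        · refine exlim_congr
            (g := fun t => (-x 3) + t ^ (b 0 + b 1 - b 3) * (x 0 * x 1)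
              + t ^ (0:ℝ) * 0 + t ^ (0:ℝ) * 0)
            (fun t ht => ?_) (limgen _ _ _ _ _ _ _ (by linarith) hz hz)
          have hne : ∀ a : ℝ, t ^ a ≠ 0 := fun a => (Real.rpow_pos_of_pos ht a).ne'
          simp only [fmk3, udil_apply, uinv3, Real.rpow_zero, Real.rpow_sub ht,
            Real.rpow_add ht, Real.inv_rpow ht.le]
          field_simp; ring
        · refine exlim_congr
            (g := fun t => (-x 4) + t ^ (b 1 + b 2 - b 4) * (x 1 * x 2)
              + t ^ (0:ℝ) * 0 + t ^ (0:ℝ) * 0)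
            (fun t ht => ?_) (limgen _ _ _ _ _ _ _ (by linarith) hz hz)
          have hne : ∀ a : ℝ, t ^ a ≠ 0 := fun a => (Real.rpow_pos_of_pos ht a).ne'
          simp only [fmk4, udil_apply, uinv4, Real.rpow_zero, Real.rpow_sub ht,
            Real.rpow_add ht, Real.inv_rpow ht.le]
          field_simp; ring
        · refine exlim_congr
            (g := fun t => (-x 5) + t ^ (b 0 + b 4 - b 5) * (x 0 * x 4)
              + t ^ (b 0 + b 1 + b 2 - b 5) * (-(x 0 * x 1 * x 2))
              + t ^ (b 2 + b 3 - b 5) * (x 2 * x 3))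
            (fun t ht => ?_) (limgen _ _ _ _ _ _ _ (by linarith) h5 (by linarith))
          have hne : ∀ a : ℝ, t ^ a ≠ 0 := fun a => (Real.rpow_pos_of_pos ht a).ne'
          simp only [fmk5, udil_apply, uinv5, Real.rpow_zero, Real.rpow_sub ht,
            Real.rpow_add ht, Real.inv_rpow ht.le]
          field_simp; ring
end
end
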